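/- arXiv:math/0306318 — 3 statements merged into one kernel-verified Lean document; each statement's English description precedes it below -/
import Mathlib

section
/- Let M be an m×n matrix with entries in K such that every adjacent maximal minor of M vanishes (i.e., for each 1 ≤ c ≤ n−m+1 the determinant of the submatrix of M on columns c,…,c+m−1 is zero). Then there exists a prime sequence Γ = ([a_1,b_1],…,[a_k,b_k]) such that for every i the submatrix of M on the columns [a_i,b_i] ∩ [1,n] has rank at most m−1, and for every 1 ≤ i ≤ k−1 the submatrix of M on the columns [a_{i+1}, b_i] has rank at most b_i − a_{i+1}. -/
open MvPolynomial
/-- A prime sequence for the parameters `m`, `n`: a list of integer intervals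
`[a_1,b_1], …, [a_k,b_k]` (recorded as pairs) covering `[0, n+1]`, each of width at
least `m` (i.e. containing more than `m` integers), with strictly increasing left and
right endpoints, consecutive intervals overlapping in at least `1` and at most `m - 1`
columns. -/
def IsPrimeSeq (m n : ℕ) (Γ : List (ℕ × ℕ)) : Prop :=
  ∃ h0 : 0 < Γ.length,
    (Γ[0]'h0).1 = 0 ∧
    (Γ[Γ.length - 1]'(by omega)).2 = n + 1 ∧
    (∀ i (hi : i < Γ.length), (Γ[i]'hi).1 + m ≤ (Γ[i]'hi).2) ∧
    ∀ i (hi : i + 1 < Γ.length),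
      (Γ[i]'(by omega)).1 < (Γ[i + 1]'hi).1 ∧
      (Γ[i]'(by omega)).2 < (Γ[i + 1]'hi).2 ∧
      (Γ[i + 1]'hi).1 ≤ (Γ[i]'(by omega)).2 ∧
      (Γ[i]'(by omega)).2 + 2 ≤ (Γ[i + 1]'hi).1 + m


/-- The submatrix of `M` on the (1-based) columns in the interval `[a, b]`
(implicitly intersected with `[1, n]`). -/
def colSubmatrix {K : Type*} [Field K] {m n : ℕ} (M : Matrix (Fin m) (Fin n) K)
    (a b : ℕ) : Matrix (Fin m) {j : Fin n // a ≤ (j : ℕ) + 1 ∧ (j : ℕ) + 1 ≤ b} K :=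
  M.submatrix id fun j => (j : Fin n)

namespace PrimeSeqAux

open Module Submodule Matrix

section
variable {K : Type*} [Field K] {m n : ℕ} (M : Matrix (Fin m) (Fin n) K)

noncomputable def colSpan (a b : ℕ) : Submodule K (Fin m → K) :=
  Submodule.span K (Mᵀ '' {j : Fin n | a ≤ (j : ℕ) + 1 ∧ (j : ℕ) + 1 ≤ b})

noncomputable def rk (a b : ℕ) : ℕ := finrank K (colSpan M a b)

variable {M}

lemma rk_def (a b : ℕ) : rk M a b = finrank K (colSpan M a b) := rfl

lemma colSpan_mono {a a' b b' : ℕ} (ha : a' ≤ a) (hb : b ≤ b') :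
    colSpan M a b ≤ colSpan M a' b' :=
  span_mono (Set.image_mono fun _ hj => ⟨le_trans ha hj.1, le_trans hj.2 hb⟩)

lemma rk_mono {a a' b b' : ℕ} (ha : a' ≤ a) (hb : b ≤ b') :
    rk M a b ≤ rk M a' b' :=
  Submodule.finrank_mono (colSpan_mono ha hb)

lemma rk_le_m (a b : ℕ) : rk M a b ≤ m := by
  have h := Submodule.finrank_le (colSpan M a b)
  rwa [finrank_fin_fun] at h

lemma col_mem_colSpan {a b : ℕ} (j : Fin n) (h1 : a ≤ (j : ℕ) + 1) (h2 : (j : ℕ) + 1 ≤ b) :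
    Mᵀ j ∈ colSpan M a b :=
  subset_span ⟨j, ⟨h1, h2⟩, rfl⟩

lemma colSpan_succ {a b : ℕ} (hb : b < n) (hab : a ≤ b + 1) :
    colSpan M a (b + 1) =
      Submodule.span K (insert (Mᵀ ⟨b, hb⟩)
        (Mᵀ '' {j : Fin n | a ≤ (j : ℕ) + 1 ∧ (j : ℕ) + 1 ≤ b})) := by
  rw [colSpan, show {j : Fin n | a ≤ (j : ℕ) + 1 ∧ (j : ℕ) + 1 ≤ b + 1} =
      insert (⟨b, hb⟩ : Fin n) {j : Fin n | a ≤ (j : ℕ) + 1 ∧ (j : ℕ) + 1 ≤ b} by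
    ext j
    simp only [Set.mem_setOf_eq, Set.mem_insert_iff, Fin.ext_iff]
    omega]
  exact congrArg (span K) Set.image_insert_eq

lemma colSpan_stable {a b : ℕ} (hb : n ≤ b) : colSpan M a (b + 1) = colSpan M a b := by
  unfold colSpan
  have h : {j : Fin n | a ≤ (j : ℕ) + 1 ∧ (j : ℕ) + 1 ≤ b + 1} =
      {j : Fin n | a ≤ (j : ℕ) + 1 ∧ (j : ℕ) + 1 ≤ b} := by
    ext j; have := j.2; simp only [Set.mem_setOf_eq]; omega
  rw [h]

lemma colSpan_zero (b : ℕ) : colSpan M 0 b = colSpan M 1 b := by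
  unfold colSpan
  have h : {j : Fin n | 0 ≤ (j : ℕ) + 1 ∧ (j : ℕ) + 1 ≤ b} =
      {j : Fin n | 1 ≤ (j : ℕ) + 1 ∧ (j : ℕ) + 1 ≤ b} := by
    ext j; simp only [Set.mem_setOf_eq]; omega
  rw [h]

lemma finrank_span_singleton_le' (v : Fin m → K) : finrank K (K ∙ v) ≤ 1 := by
  rcases eq_or_ne v 0 with h | h
  · rw [h, Submodule.span_zero_singleton]
    simp
  · rw [finrank_span_singleton h]

lemma rk_succ_le (a b : ℕ) : rk M a (b + 1) ≤ rk M a b + 1 := by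
  rcases lt_or_ge b n with hb | hb
  · rcases le_or_gt a (b + 1) with hab | hab
    · rw [rk_def, colSpan_succ hb hab, span_insert]
      refine le_trans (Submodule.finrank_add_le_finrank_add_finrank _ _) ?_
      have h1 := finrank_span_singleton_le' (K := K) (Mᵀ ⟨b, hb⟩)
      rw [rk_def, colSpan]
      omega
    · have h2 : colSpan M a (b + 1) = colSpan M a b := by
        unfold colSpan
        have h : {j : Fin n | a ≤ (j : ℕ) + 1 ∧ (j : ℕ) + 1 ≤ b + 1} =
            {j : Fin n | a ≤ (j : ℕ) + 1 ∧ (j : ℕ) + 1 ≤ b} := by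
          ext j; simp only [Set.mem_setOf_eq]; omega
        rw [h]
      rw [rk_def, h2, ← rk_def]; omega
  · rw [rk_def, colSpan_stable hb, ← rk_def]; omega

lemma rk_add_le (a b s : ℕ) : rk M a (b + s) ≤ rk M a b + s := by
  induction s with
  | zero => simp
  | succ s ih =>
      have h : b + (s + 1) = (b + s) + 1 := by omega
      rw [h]
      have := rk_succ_le (M := M) a (b + s)
      omega

lemma not_mem_of_rk_lt {a b : ℕ} (hb : b < n) (hab : a ≤ b + 1)
    (h : rk M a b < rk M a (b + 1)) : Mᵀ ⟨b, hb⟩ ∉ colSpan M a b := by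
  intro hmem
  have h2 : colSpan M a (b + 1) = colSpan M a b := by
    rw [colSpan_succ hb hab, span_insert_eq_span hmem]; rfl
  rw [rk_def, rk_def, h2] at h
  omega

lemma rank_colSubmatrix (a b : ℕ) :
    (colSubmatrix M a b).rank = rk M a b := by
  rw [Matrix.rank_eq_finrank_span_cols, rk_def]
  have hspan : Submodule.span K (Set.range (colSubmatrix M a b)ᵀ) = colSpan M a b := by
    congr 1
    have h : (colSubmatrix M a b)ᵀ =
        fun j : {j : Fin n // a ≤ (j : ℕ) + 1 ∧ (j : ℕ) + 1 ≤ b} => Mᵀ (j : Fin n) := rfl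
    rw [h]
    rw [show (fun j : {j : Fin n // a ≤ (j : ℕ) + 1 ∧ (j : ℕ) + 1 ≤ b} => Mᵀ (j : Fin n))
        = Mᵀ ∘ (Subtype.val) from rfl]
    exact (Set.range_comp _ _).trans (congrArg _ Subtype.range_coe)
  rw [← hspan]; rfl

lemma window_rk (hM : ∀ (c : ℕ) (hc : c + m ≤ n),
      (Matrix.of fun i j : Fin m =>
        M i (⟨c + j.1, lt_of_lt_of_le (Nat.add_lt_add_left j.2 c) hc⟩ : Fin n)).det = 0)
    {c : ℕ} (hc : c + m ≤ n) : finrank K (colSpan M (c + 1) (c + m)) ≤ m - 1 := by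
  set N : Matrix (Fin m) (Fin m) K :=
    Matrix.of fun i j : Fin m => M i (⟨c + j.1, lt_of_lt_of_le (Nat.add_lt_add_left j.2 c) hc⟩ : Fin n) with hN
  have hdet : N.det = 0 := hM c hc
  obtain ⟨v, hv0, hv⟩ := (Matrix.exists_mulVec_eq_zero_iff).mpr hdet
  have hker : 0 < finrank K (LinearMap.ker N.mulVecLin) := by
    rw [finrank_pos_iff]
    refine ⟨⟨⟨v, ?_⟩, 0, ?_⟩⟩
    · rw [LinearMap.mem_ker, Matrix.mulVecLin_apply, hv]
    · simp only [ne_eq, Submodule.mk_eq_zero]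
      exact hv0
  have hrn := LinearMap.finrank_range_add_finrank_ker (N.mulVecLin)
  rw [finrank_fin_fun] at hrn
  have hrank : N.rank ≤ m - 1 := by
    rw [Matrix.rank]
    omega
  rw [Matrix.rank_eq_finrank_span_cols] at hrank
  have hset : Set.range Nᵀ = Mᵀ '' {j : Fin n | c + 1 ≤ (j : ℕ) + 1 ∧ (j : ℕ) + 1 ≤ c + m} := by
    ext x
    constructor
    · rintro ⟨j, rfl⟩
      exact ⟨⟨c + j.1, lt_of_lt_of_le (Nat.add_lt_add_left j.2 c) hc⟩, ⟨by simp, by have := j.2; simp⟩, rfl⟩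
    · rintro ⟨j', ⟨h1, h2⟩, rfl⟩
      refine ⟨⟨j'.1 - c, by omega⟩, ?_⟩
      have hcc : c + (j'.1 - c) = j'.1 := by omega
      funext i
      show N i _ = M i j'
      simp only [hN, Matrix.of_apply]
      congr 1
      exact Fin.ext hcc
  rw [colSpan, ← hset]
  exact hrank

/-- The tail portion of a prime sequence starting at `a`, with all the rank
conditions. -/
def GoodTail (M : Matrix (Fin m) (Fin n) K) (a : ℕ) (Δ : List (ℕ × ℕ)) : Prop :=
  ∃ h0 : 0 < Δ.length,
    (Δ[0]'h0).1 = a ∧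
    (Δ[Δ.length - 1]'(by omega)).2 = n + 1 ∧
    (∀ i (hi : i < Δ.length), (Δ[i]'hi).1 + m ≤ (Δ[i]'hi).2) ∧
    (∀ i (hi : i + 1 < Δ.length),
      (Δ[i]'(by omega)).1 < (Δ[i + 1]'hi).1 ∧
      (Δ[i]'(by omega)).2 < (Δ[i + 1]'hi).2 ∧
      (Δ[i + 1]'hi).1 ≤ (Δ[i]'(by omega)).2 ∧
      (Δ[i]'(by omega)).2 + 2 ≤ (Δ[i + 1]'hi).1 + m) ∧
    (∀ i (hi : i < Δ.length), rk M (Δ[i]'hi).1 (Δ[i]'hi).2 ≤ m - 1) ∧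
    (∀ i (hi : i + 1 < Δ.length),
      rk M (Δ[i + 1]'hi).1 (Δ[i]'(by omega)).2 ≤ (Δ[i]'(by omega)).2 - (Δ[i + 1]'hi).1)

lemma GoodTail.cons {x b' a'' : ℕ} {Δ : List (ℕ × ℕ)} (h : GoodTail M a'' Δ)
    (h1 : x + m ≤ b') (h2 : x < a'') (h3 : a'' ≤ b') (h4 : b' + 2 ≤ a'' + m)
    (h5 : rk M x b' ≤ m - 1) (h6 : rk M a'' b' ≤ b' - a'') :
    GoodTail M x ((x, b') :: Δ) := by
  obtain ⟨h0, hhead, hlast, hwidth, hcons, hrk, hov⟩ := h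
  have hlen : ((x, b') :: Δ).length = Δ.length + 1 := by simp
  refine ⟨by simp, by simp, ?_, ?_, ?_, ?_, ?_⟩
  · -- last
    simp only [List.length_cons, Nat.add_sub_cancel]
    rw [List.getElem_cons, dif_neg (by omega)]
    exact hlast
  · intro i hi
    match i with
    | 0 => simpa using h1
    | i + 1 =>
        have hi' : i < Δ.length := by simp at hi; omega
        simpa using hwidth i hi'
  · intro i hi
    match i with
    | 0 =>
        have h02 : (Δ[0]'h0).2 ≥ a'' + m := by
          have := hwidth 0 h0
          omega
        refine ⟨by simpa [hhead] using h2, by simp; omega, by simpa [hhead] using h3,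
          by simp; omega⟩
    | i + 1 =>
        have hi' : i + 1 < Δ.length := by simp at hi; omega
        simpa using hcons i hi'
  · intro i hi
    match i with
    | 0 => simpa using h5
    | i + 1 =>
        have hi' : i < Δ.length := by simp at hi; omega
        simpa using hrk i hi'
  · intro i hi
    match i with
    | 0 => simpa [hhead] using h6
    | i + 1 =>
        have hi' : i + 1 < Δ.length := by simp at hi; omega
        simpa using hov i hi'

end

section
variable {K : Type*} [Field K] {m n : ℕ} {M : Matrix (Fin m) (Fin n) K}

lemma exists_next (hm : 2 ≤ m) (hmn : m ≤ n)
    (hM : ∀ (c : ℕ) (hc : c + m ≤ n),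
      (Matrix.of fun i j : Fin m =>
        M i (⟨c + j.1, lt_of_lt_of_le (Nat.add_lt_add_left j.2 c) hc⟩ : Fin n)).det = 0)
    {a b' : ℕ} (ha : 1 ≤ a) (hmb : m ≤ b') (ha2 : a + m ≤ b' + 2)
    (hb'n : b' + 1 ≤ n) (hrk : rk M a b' ≤ m - 1) (hnot : ¬ rk M a (b' + 1) ≤ m - 1) :
    ∃ a'', b' + 2 ≤ a'' + m ∧ a'' ≤ b' ∧ a'' + m ≤ n + 1 ∧ 2 ≤ a'' ∧
      rk M a'' b' ≤ b' - a'' ∧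
      ∀ a', a'' < a' → a' ≤ b' → a' + m ≤ n + 1 → b' - a' < rk M a' b' := by
  classical
  have hb'ltn : b' < n := by omega
  have hvnot : Mᵀ ⟨b', hb'ltn⟩ ∉ colSpan M a b' :=
    not_mem_of_rk_lt hb'ltn (by omega) (by omega)
  have hWle : colSpan M (b' + 2 - m) b' ≤ colSpan M a b' := colSpan_mono (by omega) le_rfl
  have hvmem : Mᵀ ⟨b', hb'ltn⟩ ∈ colSpan M (b' + 2 - m) (b' + 1) :=
    col_mem_colSpan ⟨b', hb'ltn⟩ (by simp; omega) (by simp)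
  have hlt : colSpan M (b' + 2 - m) b' < colSpan M (b' + 2 - m) (b' + 1) :=
    lt_of_le_not_ge (colSpan_mono le_rfl (by omega))
      (fun hle => hvnot (hWle (hle hvmem)))
  have hWrank := Submodule.finrank_lt_finrank_of_lt hlt
  have hwin := window_rk hM (c := b' + 1 - m) (by omega)
  rw [show b' + 1 - m + 1 = b' + 2 - m by omega, show b' + 1 - m + m = b' + 1 by omega] at hwin
  set Q := fun a' => b' + 2 ≤ a' + m ∧ rk M a' b' ≤ b' - a' with hQ
  have hQwit : Q (b' + 2 - m) := ⟨by omega, by rw [rk_def]; omega⟩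
  have hQbound : b' + 2 - m ≤ min b' (n + 1 - m) := by omega
  have hspec : Q (Nat.findGreatest Q (min b' (n + 1 - m))) :=
    Nat.findGreatest_spec hQbound hQwit
  have hge : b' + 2 - m ≤ Nat.findGreatest Q (min b' (n + 1 - m)) :=
    Nat.le_findGreatest hQbound hQwit
  have hle2 : Nat.findGreatest Q (min b' (n + 1 - m)) ≤ min b' (n + 1 - m) :=
    Nat.findGreatest_le _
  refine ⟨Nat.findGreatest Q (min b' (n + 1 - m)), hspec.1, by omega, by omega, by omega,
    hspec.2, ?_⟩
  intro a' h1 h2 h3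
  by_contra hcon
  push_neg at hcon
  have hnq : ¬ Q a' := Nat.findGreatest_is_greatest h1 (by omega)
  exact hnq ⟨by omega, hcon⟩

lemma rec_lemma (hm : 2 ≤ m) (hmn : m ≤ n)
    (hM : ∀ (c : ℕ) (hc : c + m ≤ n),
      (Matrix.of fun i j : Fin m =>
        M i (⟨c + j.1, lt_of_lt_of_le (Nat.add_lt_add_left j.2 c) hc⟩ : Fin n)).det = 0) :
    ∀ (N a b : ℕ), 1 ≤ a → a + m ≤ n + 1 → a ≤ b → b + 1 ≤ n → b + 2 ≤ a + m →
      rk M a b ≤ b - a →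
      (∀ a', a < a' → a' ≤ b → a' + m ≤ n + 1 → b - a' < rk M a' b) →
      n ≤ a + N → ∃ Δ, GoodTail M a Δ := by
  intro N
  induction N with
  | zero => intro a b _ _ hab hbn _ _ _ hN; omega
  | succ N ih =>
    intro a b ha ham hab hbn hba hrk hmax hN
    classical
    set P := fun x => rk M a x ≤ m - 1 with hP
    have hwitP : ∃ w, a + m ≤ w ∧ w ≤ n + 1 ∧ P w := by
      rcases le_or_gt (a + m) n with han | han
      · refine ⟨a + m, le_rfl, by omega, ?_⟩
        show rk M a (a + m) ≤ m - 1
        by_contra hcon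
        push_neg at hcon
        -- main linear algebra argument
        have hU' : b - a ≤ finrank K (colSpan M (a + 1) b) := by
          rcases eq_or_lt_of_le hab with heq | hlt
          · have hz : b - a = 0 := by omega
            rw [hz]; exact Nat.zero_le _
          · have hx := hmax (a + 1) (by omega) hlt (by omega)
            rw [rk_def] at hx
            omega
        have hUb : finrank K (colSpan M a b) ≤ b - a := hrk
        have heqspan : colSpan M (a + 1) b = colSpan M a b :=
          Submodule.eq_of_le_of_finrank_le (colSpan_mono (by omega) le_rfl) (by omega)
        have hva : Mᵀ ⟨a - 1, by omega⟩ ∈ colSpan M (a + 1) (a + m) := by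
          have hmem : Mᵀ ⟨a - 1, by omega⟩ ∈ colSpan M a b :=
            col_mem_colSpan ⟨a - 1, by omega⟩ (by simp; omega) (by simp; omega)
          rw [← heqspan] at hmem
          exact colSpan_mono le_rfl (by omega) hmem
        have hins : colSpan M a (a + m) = colSpan M (a + 1) (a + m) := by
          have hset : {j : Fin n | a ≤ (j : ℕ) + 1 ∧ (j : ℕ) + 1 ≤ a + m} =
              insert (⟨a - 1, by omega⟩ : Fin n)
                {j : Fin n | a + 1 ≤ (j : ℕ) + 1 ∧ (j : ℕ) + 1 ≤ a + m} := by
            ext j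
            simp only [Set.mem_setOf_eq, Set.mem_insert_iff, Fin.ext_iff]
            omega
          rw [colSpan, hset]
          refine (congrArg (span K) Set.image_insert_eq).trans ?_
          rw [span_insert_eq_span hva]
          rfl
        have hwin := window_rk hM (c := a) (by omega)
        rw [rk_def, hins] at hcon
        omega
      · refine ⟨n + 1, by omega, le_rfl, ?_⟩
        show rk M a (n + 1) ≤ m - 1
        have h1 : rk M a (n + 1) = rk M a n := by
          rw [rk_def, rk_def, colSpan_stable le_rfl]
        have h2 := rk_add_le (M := M) a b (n - b)
        rw [show b + (n - b) = n by omega] at h2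
        omega
    obtain ⟨w, hw1, hw2, hw3⟩ := hwitP
    have hwit : a + m ≤ Nat.findGreatest P (n + 1) := le_trans hw1 (Nat.le_findGreatest hw2 hw3)
    have hPb' : P (Nat.findGreatest P (n + 1)) := Nat.findGreatest_spec hw2 hw3
    have hb'le : Nat.findGreatest P (n + 1) ≤ n + 1 := Nat.findGreatest_le _
    set b' := Nat.findGreatest P (n + 1) with hb'def
    rcases le_or_gt n b' with hcase | hcase
    · -- single interval to the end
      have hstab : rk M a (n + 1) = rk M a n := by
        rw [rk_def, rk_def, colSpan_stable le_rfl]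
      have hfull : rk M a (n + 1) ≤ m - 1 := by
        have := rk_mono (M := M) (le_refl a) hcase
        have hPb'' : rk M a b' ≤ m - 1 := hPb'
        omega
      refine ⟨[(a, n + 1)], by simp, by simp, by simp, ?_, ?_, ?_, ?_⟩
      · intro i hi
        simp only [List.length_cons, List.length_nil] at hi
        match i with
        | 0 => simpa using ham
      · intro i hi
        simp at hi
      · intro i hi
        simp only [List.length_cons, List.length_nil] at hi
        match i with
        | 0 => simpa using hfull
      · intro i hi
        simp at hi
    · -- recurse
      have hnot : ¬ P (b' + 1) := Nat.findGreatest_is_greatest (n := n + 1) (by omega) (by omega)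
      obtain ⟨a'', ha''1, ha''2, ha''3, ha''4, ha''5, ha''6⟩ :=
        exists_next hm hmn hM ha (by omega) (by omega) (by omega) hPb' hnot
      obtain ⟨Δ, hΔ⟩ := ih a'' b' (by omega) ha''3 ha''2 (by omega) ha''1 ha''5 ha''6 (by omega)
      exact ⟨(a, b') :: Δ, hΔ.cons hwit (by omega) ha''2 ha''1 hPb' ha''5⟩

end


end PrimeSeqAux

/-- if all adjacent maximal minors of a matrix `M` vanish, then there is
a prime sequence `Γ` such that the submatrix of `M` on each interval of `Γ` has rank
at most `m - 1` and the submatrix on each overlap `[a_{i+1}, b_i]` of consecutive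
intervals has rank at most `b_i - a_{i+1}`. -/
theorem exists_primeSeq_of_adjacent_minors_vanish
    (K : Type*) [Field K] (m n : ℕ) (hm : 2 ≤ m) (hmn : m ≤ n)
    (M : Matrix (Fin m) (Fin n) K)
    (hM : ∀ (c : ℕ) (hc : c + m ≤ n),
      (Matrix.of fun i j : Fin m =>
        M i (⟨c + j.1, by have := j.2; omega⟩ : Fin n)).det = 0) :
    ∃ Γ : List (ℕ × ℕ), IsPrimeSeq m n Γ ∧
      (∀ i, i < Γ.length → (colSubmatrix M Γ[i]!.1 Γ[i]!.2).rank ≤ m - 1) ∧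
      (∀ i, i + 1 < Γ.length →
        (colSubmatrix M Γ[i + 1]!.1 Γ[i]!.2).rank ≤ Γ[i]!.2 - Γ[i + 1]!.1) := by
  classical
  open PrimeSeqAux in
  suffices h : ∃ Γ : List (ℕ × ℕ), GoodTail M 0 Γ by
    obtain ⟨Γ, h0, hh, hl, hw, hc, hr, ho⟩ := h
    refine ⟨Γ, ⟨h0, hh, hl, hw, hc⟩, ?_, ?_⟩
    · intro i hi
      rw [getElem!_pos Γ i hi, rank_colSubmatrix]
      exact hr i hi
    · intro i hi
      rw [getElem!_pos Γ i (by omega), getElem!_pos Γ (i + 1) hi, rank_colSubmatrix]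
      exact ho i hi
  set P1 := fun x => rk M 1 x ≤ m - 1 with hP1
  have hwin0 := window_rk hM (c := 0) (by omega)
  rw [show (0 : ℕ) + 1 = 1 by omega, show (0 : ℕ) + m = m by omega] at hwin0
  have hP1m : P1 m := by simpa [hP1, rk_def] using hwin0
  have hwit : m ≤ Nat.findGreatest P1 (n + 1) := Nat.le_findGreatest (by omega) hP1m
  have hPb : P1 (Nat.findGreatest P1 (n + 1)) := Nat.findGreatest_spec (by omega) hP1m
  have hb1le : Nat.findGreatest P1 (n + 1) ≤ n + 1 := Nat.findGreatest_le _
  set b₁ := Nat.findGreatest P1 (n + 1) with hb₁def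
  rcases le_or_gt n b₁ with hcase | hcase
  · refine ⟨[(0, n + 1)], by simp, by simp, by simp, ?_, ?_, ?_, ?_⟩
    · intro i hi
      simp only [List.length_cons, List.length_nil] at hi
      match i with
      | 0 => simpa using (by omega : 0 + m ≤ n + 1)
    · intro i hi; simp at hi
    · intro i hi
      simp only [List.length_cons, List.length_nil] at hi
      match i with
      | 0 =>
        have he : rk M 0 (n + 1) = rk M 1 n := by
          rw [rk_def, colSpan_zero, colSpan_stable le_rfl, ← rk_def]
        have hmono := rk_mono (M := M) (le_refl 1) hcase
        have hPb' : rk M 1 b₁ ≤ m - 1 := hPb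
        simpa using (by omega : rk M 0 (n + 1) ≤ m - 1)
    · intro i hi; simp at hi
  · have hnot : ¬ P1 (b₁ + 1) := Nat.findGreatest_is_greatest (n := n + 1) (by omega) (by omega)
    obtain ⟨a₂, h1, h2, h3, h4, h5, h6⟩ :=
      exists_next hm hmn hM (le_refl 1) (by omega) (by omega) (by omega) hPb hnot
    obtain ⟨Δ, hΔ⟩ :=
      rec_lemma hm hmn hM n a₂ b₁ (by omega) h3 h2 (by omega) h1 h5 h6 (by omega)
    refine ⟨(0, b₁) :: Δ, hΔ.cons (by omega) (by omega) h2 h1 ?_ h5⟩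
    have he : rk M 0 b₁ = rk M 1 b₁ := by rw [rk_def, colSpan_zero, ← rk_def]
    have hPb' : rk M 1 b₁ ≤ m - 1 := hPb
    omega
end

section
/- Fix m ≥ 2 and for each n ≥ 1 let f_m(n) denote the number of prime sequences for the parameters m, n. Then f_m(n) = 0 for 1 ≤ n ≤ m−2, f_m(m−1) = f_m(m) = 1, and for all n ≥ m the recurrence f_m(n+1) = Σ_{i=0}^{m−1} f_m(n−i) holds. -/
set_option maxHeartbeats 1000000
namespace PrimeSeqAux

lemma singleton_iff (m n : ℕ) (p : ℕ × ℕ) :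
    IsPrimeSeq m n [p] ↔ p.1 = 0 ∧ p.2 = n + 1 ∧ p.1 + m ≤ p.2 := by
  constructor
  · rintro ⟨h0, h1, h2, h3, _⟩
    exact ⟨by simpa using h1, by simpa using h2, by simpa using h3 0 (by simp)⟩
  · rintro ⟨h1, h2, h3⟩
    refine ⟨by simp, by simpa, by simpa, ?_, ?_⟩
    · intro i hi
      obtain rfl : i = 0 := by simpa using hi
      simpa using h3
    · intro i hi
      simp at hi


lemma first_restrict (m n : ℕ) (Δ : List (ℕ × ℕ)) (p : ℕ × ℕ)
    (h : IsPrimeSeq m n (Δ ++ [p])) (hL : 0 < Δ.length) : (Δ[0]'hL).1 = 0 := by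
  obtain ⟨h0, h1, -, -, -⟩ := h
  rwa [List.getElem_append_left hL] at h1

lemma width_restrict (m n : ℕ) (Δ : List (ℕ × ℕ)) (p : ℕ × ℕ)
    (h : IsPrimeSeq m n (Δ ++ [p])) :
    ∀ i (hi : i < Δ.length), (Δ[i]'hi).1 + m ≤ (Δ[i]'hi).2 := by
  obtain ⟨h0, -, -, h3, -⟩ := h
  intro i hi
  have := h3 i (by simp; omega)
  rwa [List.getElem_append_left hi] at this

lemma width_last (m n : ℕ) (Δ : List (ℕ × ℕ)) (p : ℕ × ℕ)
    (h : IsPrimeSeq m n (Δ ++ [p])) : p.1 + m ≤ p.2 := by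
  obtain ⟨h0, -, -, h3, -⟩ := h
  have := h3 Δ.length (by simp)
  rwa [List.getElem_concat_length (l := Δ) (a := p) (i := Δ.length) rfl (by simp)] at this

lemma chain_restrict (m n : ℕ) (Δ : List (ℕ × ℕ)) (p : ℕ × ℕ)
    (h : IsPrimeSeq m n (Δ ++ [p])) :
    ∀ i (hi : i + 1 < Δ.length),
      (Δ[i]'(by omega)).1 < (Δ[i + 1]'hi).1 ∧
      (Δ[i]'(by omega)).2 < (Δ[i + 1]'hi).2 ∧
      (Δ[i + 1]'hi).1 ≤ (Δ[i]'(by omega)).2 ∧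
      (Δ[i]'(by omega)).2 + 2 ≤ (Δ[i + 1]'hi).1 + m := by
  obtain ⟨h0, -, -, -, h4⟩ := h
  intro i hi
  have := h4 i (by simp; omega)
  rwa [List.getElem_append_left (show i < Δ.length by omega),
    List.getElem_append_left hi] at this

lemma chain_boundary (m n : ℕ) (Δ : List (ℕ × ℕ)) (hΔ : Δ ≠ []) (p : ℕ × ℕ)
    (h : IsPrimeSeq m n (Δ ++ [p])) :
    (Δ.getLast hΔ).1 < p.1 ∧ (Δ.getLast hΔ).2 < p.2 ∧ p.1 ≤ (Δ.getLast hΔ).2 ∧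
    (Δ.getLast hΔ).2 + 2 ≤ p.1 + m := by
  have hL : 0 < Δ.length := List.length_pos_iff.mpr hΔ
  obtain ⟨h0, -, -, -, h4⟩ := h
  have hbd := h4 (Δ.length - 1) (by simp; omega)
  rw [List.getElem_concat_length (l := Δ) (a := p) (i := Δ.length - 1 + 1) (by omega) (by simp; omega),
      List.getElem_append_left (show Δ.length - 1 < Δ.length by omega)] at hbd
  rw [List.getLast_eq_getElem]
  exact hbd

lemma last_restrict (m n : ℕ) (Δ : List (ℕ × ℕ)) (p : ℕ × ℕ)
    (h : IsPrimeSeq m n (Δ ++ [p])) : p.2 = n + 1 := by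
  obtain ⟨h0, -, h2, -, -⟩ := h
  rw [← List.getElem_concat_length (l := Δ) (a := p) (i := (Δ ++ [p]).length - 1) (by simp) (by simp)]
  exact h2

lemma append_iff (m n : ℕ) (hm : 1 ≤ m) (Δ : List (ℕ × ℕ)) (hΔ : Δ ≠ []) (p : ℕ × ℕ) :
    IsPrimeSeq m n (Δ ++ [p]) ↔
      IsPrimeSeq m ((Δ.getLast hΔ).2 - 1) Δ ∧ p.2 = n + 1 ∧
      (Δ.getLast hΔ).1 < p.1 ∧ (Δ.getLast hΔ).2 < p.2 ∧ p.1 ≤ (Δ.getLast hΔ).2 ∧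
      (Δ.getLast hΔ).2 + 2 ≤ p.1 + m ∧ p.1 + m ≤ p.2 := by
  have hL : 0 < Δ.length := List.length_pos_iff.mpr hΔ
  have hlen : (Δ ++ [p]).length = Δ.length + 1 := by simp
  have hlast : Δ.getLast hΔ = Δ[Δ.length - 1] := List.getLast_eq_getElem hΔ
  constructor
  · intro h
    have hp2 : p.2 = n + 1 := last_restrict m n Δ p h
    have hbd := chain_boundary m n Δ hΔ p h
    have hwp : p.1 + m ≤ p.2 := width_last m n Δ p h
    have hwidth := width_restrict m n Δ p h
    have hwlast := hwidth (Δ.length - 1) (by omega)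
    refine ⟨⟨hL, first_restrict m n Δ p h hL, ?_, hwidth, chain_restrict m n Δ p h⟩,
      hp2, hbd.1, hbd.2.1, hbd.2.2.1, hbd.2.2.2, hwp⟩
    rw [hlast]
    have : m ≤ Δ[Δ.length - 1].2 := by omega
    omega
  · rintro ⟨⟨h0, h1, h2, h3, h4⟩, hp2, hc1, hc2, hc3, hc4, hc5⟩
    have hb1 : 1 ≤ (Δ.getLast hΔ).2 := by
      have := h3 (Δ.length - 1) (by omega)
      rw [hlast]; omega
    have h2' : Δ[Δ.length - 1].2 = (Δ.getLast hΔ).2 := by omega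
    refine ⟨by simp, ?_, ?_, ?_, ?_⟩
    · rw [List.getElem_append_left hL]; exact h1
    · rw [List.getElem_concat_length (l := Δ) (a := p) (i := (Δ ++ [p]).length - 1) (by simp) (by simp)]
      exact hp2
    · intro i hi
      rw [hlen] at hi
      rcases Nat.lt_or_ge i Δ.length with h | h
      · rw [List.getElem_append_left h]; exact h3 i h
      · obtain rfl : i = Δ.length := by omega
        rw [List.getElem_concat_length (l := Δ) (a := p) (i := Δ.length) rfl (by simp)]; exact hc5
    · intro i hi
      rw [hlen] at hi
      rcases Nat.lt_or_ge (i + 1) Δ.length with h | h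
      · rw [List.getElem_append_left (show i < Δ.length by omega), List.getElem_append_left h]
        exact h4 i h
      · obtain hieq : i = Δ.length - 1 := by omega
        subst hieq
        rw [List.getElem_concat_length (l := Δ) (a := p) (i := Δ.length - 1 + 1) (by omega) (by simp; omega),
          List.getElem_append_left (show Δ.length - 1 < Δ.length by omega), ← hlast]
        exact ⟨hc1, hc2, hc3, hc4⟩

lemma nonempty_of (m n : ℕ) (Γ : List (ℕ × ℕ)) (h : IsPrimeSeq m n Γ) : Γ ≠ [] := by
  obtain ⟨h0, -⟩ := h
  exact List.length_pos_iff.mp h0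

lemma last_snd (m n : ℕ) (Γ : List (ℕ × ℕ)) (h : IsPrimeSeq m n Γ) (hΓ : Γ ≠ []) :
    (Γ.getLast hΓ).2 = n + 1 := by
  obtain ⟨h0, -, h2, -⟩ := h
  rw [List.getLast_eq_getElem]
  exact h2

lemma last_width (m n : ℕ) (Γ : List (ℕ × ℕ)) (h : IsPrimeSeq m n Γ) (hΓ : Γ ≠ []) :
    (Γ.getLast hΓ).1 + m ≤ (Γ.getLast hΓ).2 := by
  obtain ⟨h0, -, -, h3, -⟩ := h
  rw [List.getLast_eq_getElem]
  exact h3 _ (by omega)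



lemma getLast_eq_of_eq {α : Type*} {l : List α} {a : α} (h : l = [a]) (hne : l ≠ []) :
    l.getLast hne = a := by
  subst h; simp

lemma empty_of_small (m n : ℕ) (hmn : n + 2 ≤ m) :
    {Γ : List (ℕ × ℕ) | IsPrimeSeq m n Γ} = ∅ := by
  ext Γ
  simp only [Set.mem_setOf_eq, Set.mem_empty_iff_false, iff_false]
  rintro ⟨h0, h1, h2, h3, -⟩
  have := h3 (Γ.length - 1) (by omega)
  omega

lemma singleton_mem (m n : ℕ) (hm : m ≤ n + 1) :
    IsPrimeSeq m n [(0, n + 1)] := by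
  rw [singleton_iff]
  exact ⟨rfl, rfl, by omega⟩

lemma set_eq_of_pred (m : ℕ) (hm : 2 ≤ m) :
    {Γ : List (ℕ × ℕ) | IsPrimeSeq m (m - 1) Γ} = {[(0, m)]} := by
  ext Γ
  simp only [Set.mem_setOf_eq, Set.mem_singleton_iff]
  constructor
  · intro h
    have hne : Γ ≠ [] := nonempty_of _ _ _ h
    have hdec := List.dropLast_append_getLast hne
    by_cases hΔ : Γ.dropLast = []
    · rw [hΔ, List.nil_append] at hdec
      rw [← hdec] at h ⊢
      rw [singleton_iff] at h
      obtain ⟨e1, e2, -⟩ := h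
      have : Γ.getLast hne = (0, m) := by
        rw [Prod.ext_iff]; constructor
        · exact e1
        · rw [e2]; omega
      rw [this]
    · rw [← hdec] at h
      rw [append_iff m (m-1) (by omega) _ hΔ _] at h
      obtain ⟨hΔp, hq2, -, hlt, -, -, -⟩ := h
      have hw := last_width _ _ _ hΔp hΔ
      omega
  · rintro rfl
    have := singleton_mem m (m - 1) (by omega)
    rwa [show m - 1 + 1 = m by omega] at this

lemma set_eq_of_m (m : ℕ) (hm : 2 ≤ m) :
    {Γ : List (ℕ × ℕ) | IsPrimeSeq m m Γ} = {[(0, m + 1)]} := by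
  ext Γ
  simp only [Set.mem_setOf_eq, Set.mem_singleton_iff]
  constructor
  · intro h
    have hne : Γ ≠ [] := nonempty_of _ _ _ h
    have hdec := List.dropLast_append_getLast hne
    by_cases hΔ : Γ.dropLast = []
    · rw [hΔ, List.nil_append] at hdec
      rw [← hdec] at h ⊢
      rw [singleton_iff] at h
      obtain ⟨e1, e2, -⟩ := h
      have : Γ.getLast hne = (0, m + 1) := by
        rw [Prod.ext_iff]; exact ⟨e1, e2⟩
      rw [this]
    · exfalso
      rw [← hdec] at h
      rw [append_iff m m (by omega) _ hΔ _] at h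
      obtain ⟨hΔp, hq2, hc1, hc2, hc3, hc4, hc5⟩ := h
      have hw := last_width _ _ _ hΔp hΔ
      -- b' = m
      have hb : (Γ.dropLast.getLast hΔ).2 = m := by omega
      rw [hb] at hΔp
      have : Γ.dropLast ∈ {Γ : List (ℕ × ℕ) | IsPrimeSeq m (m - 1) Γ} := hΔp
      rw [set_eq_of_pred m hm] at this
      simp only [Set.mem_singleton_iff] at this
      have hlast0 : Γ.dropLast.getLast hΔ = (0, m) := getLast_eq_of_eq this hΔ
      rw [hlast0] at hc4
      -- m + 2 ≤ q.1 + m and q.1 + m ≤ m + 1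
      simp only [hq2] at hc5
      omega
  · rintro rfl
    exact singleton_mem m m (by omega)

lemma finite_S (m : ℕ) (hm : 1 ≤ m) (n : ℕ) :
    {Γ : List (ℕ × ℕ) | IsPrimeSeq m n Γ}.Finite := by
  induction n using Nat.strong_induction_on with
  | _ n ih =>
  have hsub : {Γ : List (ℕ × ℕ) | IsPrimeSeq m n Γ} ⊆
      insert [((0:ℕ), n+1)] (⋃ n' ∈ Finset.range n, ⋃ a ∈ Finset.range (n+2),
        (fun Δ => Δ ++ [(a, n+1)]) '' {Γ : List (ℕ × ℕ) | IsPrimeSeq m n' Γ}) := by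
    intro Γ h
    simp only [Set.mem_setOf_eq] at h
    have hne : Γ ≠ [] := nonempty_of _ _ _ h
    have hdec := List.dropLast_append_getLast hne
    simp only [Set.mem_insert_iff]
    by_cases hΔ : Γ.dropLast = []
    · rw [hΔ, List.nil_append] at hdec
      left
      rw [← hdec]
      rw [← hdec] at h
      rw [singleton_iff] at h
      obtain ⟨e1, e2, -⟩ := h
      congr 1
      rw [Prod.ext_iff]; exact ⟨e1, e2⟩
    · right
      rw [← hdec] at h
      rw [append_iff m n hm _ hΔ _] at h
      obtain ⟨hΔp, hq2, hc1, hc2, hc3, hc4, hc5⟩ := h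
      have hw := last_width _ _ _ hΔp hΔ
      simp only [Set.mem_iUnion, Finset.mem_coe, Finset.mem_range, Set.mem_image,
        Set.mem_setOf_eq]
      refine ⟨(Γ.dropLast.getLast hΔ).2 - 1, by omega, (Γ.getLast hne).1, by omega,
        Γ.dropLast, hΔp, ?_⟩
      have hq : ((Γ.getLast hne).1, n + 1) = Γ.getLast hne := by
        rw [Prod.ext_iff]; exact ⟨rfl, hq2.symm⟩
      rw [hq, hdec]
  refine Set.Finite.subset (Set.Finite.insert _ ?_) hsub
  refine Set.Finite.biUnion (Finset.range n).finite_toSet (fun n' hn' => ?_)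
  refine Set.Finite.biUnion (Finset.range (n+2)).finite_toSet (fun a _ => ?_)
  exact Set.Finite.image _ (ih n' (by simpa using hn'))



def psi0 (n : ℕ) (Γ : List (ℕ × ℕ)) : List (ℕ × ℕ) :=
  Γ.dropLast ++ [((Γ.getLastD (0,0)).1, n+2)]

def psia (m n : ℕ) (Γ : List (ℕ × ℕ)) : List (ℕ × ℕ) := Γ ++ [(n+2-m, n+2)]

def TT (m n : ℕ) (i : ℕ) : Set (List (ℕ × ℕ)) :=
  if i = 0 then psi0 n '' {Γ | IsPrimeSeq m n Γ} else psia m n '' {Γ | IsPrimeSeq m (n - i) Γ}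

lemma psi0_concat (n : ℕ) (Δ : List (ℕ × ℕ)) (q : ℕ × ℕ) :
    psi0 n (Δ ++ [q]) = Δ ++ [(q.1, n+2)] := by
  unfold psi0
  rw [List.dropLast_concat, List.getLastD_concat]

lemma T0_sub (m n : ℕ) (hm : 2 ≤ m) (hn : m ≤ n) :
    psi0 n '' {Γ | IsPrimeSeq m n Γ} ⊆ {Γ | IsPrimeSeq m (n+1) Γ} := by
  rintro _ ⟨Γ, hΓ, rfl⟩
  simp only [Set.mem_setOf_eq] at hΓ ⊢
  have hne : Γ ≠ [] := nonempty_of _ _ _ hΓ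
  have hdec := List.dropLast_append_getLast hne
  have hq2 : (Γ.getLast hne).2 = n + 1 := last_snd _ _ _ hΓ hne
  have hps : psi0 n Γ = Γ.dropLast ++ [((Γ.getLast hne).1, n+2)] := by
    conv_lhs => rw [← hdec]
    rw [psi0_concat]
  rw [hps]
  by_cases hΔ : Γ.dropLast = []
  · rw [hΔ, List.nil_append] at hdec ⊢
    rw [← hdec] at hΓ
    rw [singleton_iff] at hΓ
    obtain ⟨e1, e2, e3⟩ := hΓ
    rw [singleton_iff]
    exact ⟨e1, rfl, by omega⟩
  · rw [← hdec] at hΓ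
    rw [append_iff m n (by omega) _ hΔ _] at hΓ
    obtain ⟨hΔp, hq2', hc1, hc2, hc3, hc4, hc5⟩ := hΓ
    rw [append_iff m (n+1) (by omega) _ hΔ _]
    exact ⟨hΔp, rfl, hc1, by omega, by omega, by omega, by omega⟩

lemma Ta_sub (m n i : ℕ) (hm : 2 ≤ m) (hn : m ≤ n) (hi1 : 1 ≤ i) (him : i < m) :
    psia m n '' {Γ | IsPrimeSeq m (n - i) Γ} ⊆ {Γ | IsPrimeSeq m (n+1) Γ} := by
  rintro _ ⟨Γ, hΓ, rfl⟩
  simp only [Set.mem_setOf_eq] at hΓ ⊢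
  have hne : Γ ≠ [] := nonempty_of _ _ _ hΓ
  have hlast2 : (Γ.getLast hne).2 = n - i + 1 := last_snd _ _ _ hΓ hne
  have hlastw := last_width _ _ _ hΓ hne
  unfold psia
  rw [append_iff m (n+1) (by omega) _ hne _]
  refine ⟨?_, rfl, by omega, by omega, by omega, by omega, by omega⟩
  rw [show (Γ.getLast hne).2 - 1 = n - i by omega]
  exact hΓ

lemma cover (m n : ℕ) (hm : 2 ≤ m) (hn : m ≤ n) :
    {Γ : List (ℕ × ℕ) | IsPrimeSeq m (n+1) Γ} ⊆ ⋃ i ∈ Finset.range m, TT m n i := by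
  intro Γ h
  simp only [Set.mem_setOf_eq] at h
  have hne := nonempty_of _ _ _ h
  have hdec := List.dropLast_append_getLast hne
  have hq2 : (Γ.getLast hne).2 = n + 2 := last_snd _ _ _ h hne
  have hqw : (Γ.getLast hne).1 + m ≤ (Γ.getLast hne).2 := last_width _ _ _ h hne
  simp only [Set.mem_iUnion]
  by_cases hcase : (Γ.getLast hne).1 + m ≤ n + 1
  · refine ⟨0, Finset.mem_range.mpr (by omega), ?_⟩
    rw [TT, if_pos rfl]
    by_cases hΔ : Γ.dropLast = []
    · rw [hΔ, List.nil_append] at hdec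
      rw [← hdec] at h
      rw [singleton_iff] at h
      obtain ⟨e1, e2, e3⟩ := h
      refine ⟨[(0, n+1)], singleton_mem m n (by omega), ?_⟩
      have hps := psi0_concat n [] (0, n+1)
      rw [List.nil_append] at hps
      rw [hps, List.nil_append, ← hdec]
      congr 1
      rw [Prod.ext_iff]
      exact ⟨e1.symm, e2.symm⟩
    · rw [← hdec] at h
      rw [append_iff m (n+1) (by omega) _ hΔ _] at h
      obtain ⟨hΔp, -, hc1, hc2, hc3, hc4, hc5⟩ := h
      refine ⟨Γ.dropLast ++ [((Γ.getLast hne).1, n+1)], ?_, ?_⟩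
      · simp only [Set.mem_setOf_eq]
        rw [append_iff m n (by omega) _ hΔ _]
        exact ⟨hΔp, rfl, hc1, by omega, by omega, by omega, by omega⟩
      · rw [psi0_concat]
        conv_rhs => rw [← hdec]
        congr 1
        rw [List.cons.injEq]
        refine ⟨?_, rfl⟩
        rw [Prod.ext_iff]
        exact ⟨rfl, hq2.symm⟩
  · have hq1 : (Γ.getLast hne).1 = n + 2 - m := by omega
    by_cases hΔ : Γ.dropLast = []
    · exfalso
      rw [hΔ, List.nil_append] at hdec
      rw [← hdec] at h
      rw [singleton_iff] at h
      obtain ⟨e1, e2, -⟩ := h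
      omega
    · rw [← hdec] at h
      rw [append_iff m (n+1) (by omega) _ hΔ _] at h
      obtain ⟨hΔp, -, hc1, hc2, hc3, hc4, hc5⟩ := h
      refine ⟨n + 1 - (Γ.dropLast.getLast hΔ).2, Finset.mem_range.mpr (by omega), ?_⟩
      rw [TT, if_neg (by omega)]
      refine ⟨Γ.dropLast, ?_, ?_⟩
      · simp only [Set.mem_setOf_eq]
        rw [show n - (n + 1 - (Γ.dropLast.getLast hΔ).2) = (Γ.dropLast.getLast hΔ).2 - 1 by omega]
        exact hΔp
      · unfold psia
        conv_rhs => rw [← hdec]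
        congr 1
        rw [List.cons.injEq]
        refine ⟨?_, rfl⟩
        rw [Prod.ext_iff]
        exact ⟨hq1.symm, hq2.symm⟩

lemma T_disj (m n : ℕ) (hm : 2 ≤ m) (hn : m ≤ n) :
    ∀ i ∈ Finset.range m, ∀ j ∈ Finset.range m, i ≠ j → Disjoint (TT m n i) (TT m n j) := by
  have key : ∀ j, j ≠ 0 → Disjoint (TT m n 0) (TT m n j) := by
    intro j hj0
    rw [Set.disjoint_left]
    rintro ξ hξ0 hξj
    rw [TT, if_pos rfl] at hξ0
    rw [TT, if_neg hj0] at hξj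
    obtain ⟨Γ, hΓ, heq0⟩ := hξ0
    obtain ⟨Γ', hΓ', heqj⟩ := hξj
    simp only [Set.mem_setOf_eq] at hΓ hΓ'
    have hne := nonempty_of _ _ _ hΓ
    have hdec := List.dropLast_append_getLast hne
    have hq2 : (Γ.getLast hne).2 = n + 1 := last_snd _ _ _ hΓ hne
    have hqw := last_width _ _ _ hΓ hne
    have heq : psia m n Γ' = psi0 n Γ := heqj.trans heq0.symm
    rw [← hdec, psi0_concat] at heq
    unfold psia at heq
    obtain ⟨-, h2⟩ := List.append_inj' heq (by simp)
    rw [List.cons.injEq, Prod.ext_iff] at h2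
    obtain ⟨⟨e1, -⟩, -⟩ := h2
    omega
  intro i hi j hj hij
  rcases eq_or_ne i 0 with rfl | hi0
  · exact key j (by omega)
  rcases eq_or_ne j 0 with rfl | hj0
  · exact (key i (by omega)).symm
  rw [Set.disjoint_left]
  rintro ξ hξi hξj
  rw [TT, if_neg hi0] at hξi
  rw [TT, if_neg hj0] at hξj
  obtain ⟨Γ, hΓ, heqi⟩ := hξi
  obtain ⟨Γ', hΓ', heqj⟩ := hξj
  simp only [Set.mem_setOf_eq] at hΓ hΓ'
  have hGG : Γ = Γ' := by
    have := heqi.trans heqj.symm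
    unfold psia at this
    exact List.append_cancel_right this
  subst hGG
  have hne := nonempty_of _ _ _ hΓ
  have e1 : (Γ.getLast hne).2 = n - i + 1 := last_snd _ _ _ hΓ hne
  have e2 : (Γ.getLast hne).2 = n - j + 1 := last_snd _ _ _ hΓ' hne
  have hi' := Finset.mem_range.mp hi
  have hj' := Finset.mem_range.mp hj
  omega

lemma T_card (m n : ℕ) (hm : 2 ≤ m) (hn : m ≤ n) (i : ℕ) (hi : i < m) :
    (TT m n i).ncard = {Γ : List (ℕ × ℕ) | IsPrimeSeq m (n - i) Γ}.ncard := by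
  rcases eq_or_ne i 0 with rfl | hi0
  · rw [TT, if_pos rfl, Nat.sub_zero]
    apply Set.ncard_image_of_injOn
    intro Γ hΓ Γ' hΓ' heq
    simp only [Set.mem_setOf_eq] at hΓ hΓ'
    have hne := nonempty_of _ _ _ hΓ
    have hne' := nonempty_of _ _ _ hΓ'
    have hdec := List.dropLast_append_getLast hne
    have hdec' := List.dropLast_append_getLast hne'
    have hq2 : (Γ.getLast hne).2 = n + 1 := last_snd _ _ _ hΓ hne
    have hq2' : (Γ'.getLast hne').2 = n + 1 := last_snd _ _ _ hΓ' hne'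
    rw [← hdec, psi0_concat, ← hdec', psi0_concat] at heq
    obtain ⟨h1, h2⟩ := List.append_inj' heq (by simp)
    rw [List.cons.injEq, Prod.ext_iff] at h2
    obtain ⟨⟨e1, -⟩, -⟩ := h2
    rw [← hdec, ← hdec', h1]
    congr 1
    rw [List.cons.injEq]
    refine ⟨?_, rfl⟩
    rw [Prod.ext_iff]
    exact ⟨e1, by omega⟩
  · rw [TT, if_neg hi0]
    apply Set.ncard_image_of_injective
    intro Γ Γ' heq
    unfold psia at heq
    exact List.append_cancel_right heq

lemma ncard_biUnion {α : Type*} (s : Finset ℕ) (T : ℕ → Set α)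
    (hfin : ∀ i ∈ s, (T i).Finite)
    (hdisj : ∀ i ∈ s, ∀ j ∈ s, i ≠ j → Disjoint (T i) (T j)) :
    (⋃ i ∈ s, T i).ncard = ∑ i ∈ s, (T i).ncard := by
  classical
  induction s using Finset.induction_on with
  | empty => simp
  | @insert a t ha ih =>
    rw [Finset.set_biUnion_insert, Finset.sum_insert ha]
    have hfin' : ∀ i ∈ t, (T i).Finite := fun i hi => hfin i (Finset.mem_insert_of_mem hi)
    have hdisj' : ∀ i ∈ t, ∀ j ∈ t, i ≠ j → Disjoint (T i) (T j) := fun i hi j hj hij =>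
      hdisj i (Finset.mem_insert_of_mem hi) j (Finset.mem_insert_of_mem hj) hij
    have hfinU : (⋃ i ∈ t, T i).Finite := Set.Finite.biUnion t.finite_toSet hfin'
    have hdisjU : Disjoint (T a) (⋃ i ∈ t, T i) := by
      rw [Set.disjoint_left]
      rintro x hxa hx
      rw [Set.mem_iUnion₂] at hx
      obtain ⟨i, hi, hxi⟩ := hx
      have : i ≠ a := by rintro rfl; exact ha hi
      exact Set.disjoint_left.mp
        (hdisj a (Finset.mem_insert_self a t) i (Finset.mem_insert_of_mem hi) (Ne.symm this))
        hxa hxi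
    rw [Set.ncard_union_eq hdisjU (hfin a (Finset.mem_insert_self a t)) hfinU,
      ih hfin' hdisj']

lemma recurrence (m : ℕ) (hm : 2 ≤ m) (n : ℕ) (hn : m ≤ n) :
    {Γ : List (ℕ × ℕ) | IsPrimeSeq m (n+1) Γ}.ncard
      = ∑ i ∈ Finset.range m, {Γ : List (ℕ × ℕ) | IsPrimeSeq m (n - i) Γ}.ncard := by
  have hkey : {Γ : List (ℕ × ℕ) | IsPrimeSeq m (n+1) Γ} = ⋃ i ∈ Finset.range m, TT m n i := by
    apply Set.Subset.antisymm (cover m n hm hn)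
    intro ξ hξ
    simp only [Set.mem_iUnion] at hξ
    obtain ⟨i, hi, hmem⟩ := hξ
    rcases eq_or_ne i 0 with rfl | hi0
    · rw [TT, if_pos rfl] at hmem
      exact T0_sub m n hm hn hmem
    · rw [TT, if_neg hi0] at hmem
      exact Ta_sub m n i hm hn (by omega) (Finset.mem_range.mp hi) hmem
  have hfin : ∀ i ∈ Finset.range m, (TT m n i).Finite := by
    intro i hi
    rcases eq_or_ne i 0 with rfl | hi0
    · rw [TT, if_pos rfl]
      exact Set.Finite.image _ (finite_S m (by omega) n)
    · rw [TT, if_neg hi0]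
      exact Set.Finite.image _ (finite_S m (by omega) (n - i))
  rw [hkey, ncard_biUnion _ _ hfin (T_disj m n hm hn)]
  exact Finset.sum_congr rfl (fun i hi => T_card m n hm hn i (Finset.mem_range.mp hi))

end PrimeSeqAux


/-- the number `f_m(n)` of prime sequences for the parameters `m`, `n`
vanishes for `1 ≤ n ≤ m - 2`, equals `1` for `n = m - 1` and `n = m`, and satisfies
the recurrence `f_m(n+1) = Σ_{i=0}^{m-1} f_m(n-i)` for `n ≥ m`. -/
theorem primeSeq_count_recurrence (m : ℕ) (hm : 2 ≤ m) :
    (∀ n, 1 ≤ n → n ≤ m - 2 → {Γ : List (ℕ × ℕ) | IsPrimeSeq m n Γ}.ncard = 0) ∧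
    {Γ : List (ℕ × ℕ) | IsPrimeSeq m (m - 1) Γ}.ncard = 1 ∧
    {Γ : List (ℕ × ℕ) | IsPrimeSeq m m Γ}.ncard = 1 ∧
    ∀ n, m ≤ n →
      {Γ : List (ℕ × ℕ) | IsPrimeSeq m (n + 1) Γ}.ncard =
        ∑ i ∈ Finset.range m, {Γ : List (ℕ × ℕ) | IsPrimeSeq m (n - i) Γ}.ncard := by
  refine ⟨?_, ?_, ?_, ?_⟩
  · intro n h1 h2
    rw [PrimeSeqAux.empty_of_small m n (by omega)]
    exact Set.ncard_empty _
  · rw [PrimeSeqAux.set_eq_of_pred m hm]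
    exact Set.ncard_singleton _
  · rw [PrimeSeqAux.set_eq_of_m m hm]
    exact Set.ncard_singleton _
  · intro n hn
    exact PrimeSeqAux.recurrence m hm n hn
end

section
/- If Γ and Γ' are distinct prime sequences for the parameters m, n, then P_Γ and P_{Γ'} are incomparable; in particular P_Γ is not contained in P_{Γ'}. -/
open MvPolynomial

/-- The adjacent maximal minor of the generic `m × n` matrix starting at
(0-based) column `c`: the determinant of the `m × m` submatrix on columns
`c, c+1, …, c+m-1`. -/
noncomputable def adjMaxMinor (K : Type*) [Field K] (m n : ℕ) (c : ℕ) (hc : c + m ≤ n) :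
    MvPolynomial (Fin m × Fin n) K :=
  (Matrix.of fun i j : Fin m =>
    X (i, (⟨c + j.1, by have := j.2; omega⟩ : Fin n))).det

/-- The ideal `I_mn(m)` generated by the `n - m + 1` adjacent maximal minors. -/
noncomputable def adjMaxIdeal (K : Type*) [Field K] (m n : ℕ) :
    Ideal (MvPolynomial (Fin m × Fin n) K) :=
  Ideal.span {f | ∃ (c : ℕ) (hc : c + m ≤ n), f = adjMaxMinor K m n c hc}

/-- The set of `k × k` minors of the generic `m × n` matrix whose columns are taken
among the (1-based) column indices in `cols`. -/
def minorSet (K : Type*) [Field K] (m n k : ℕ) (cols : Set ℕ) :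
    Set (MvPolynomial (Fin m × Fin n) K) :=
  {f | ∃ (r : Fin k → Fin m) (c : Fin k → Fin n),
    Function.Injective r ∧ Function.Injective c ∧ (∀ l, (c l).1 + 1 ∈ cols) ∧
    f = (Matrix.of fun a b => X (r a, c b)).det}

/-- The ideal `P_Γ` attached to a prime sequence `Γ`: it is generated by the `m × m`
minors of the submatrices on the columns of each interval of `Γ`, together with the
maximal minors of the submatrices on the overlaps of consecutive intervals. -/
noncomputable def PGamma (K : Type*) [Field K] (m n : ℕ) (Γ : List (ℕ × ℕ)) :
    Ideal (MvPolynomial (Fin m × Fin n) K) :=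
  Ideal.span
    ({f | ∃ i < Γ.length,
        f ∈ minorSet K m n m {v | Γ[i]!.1 ≤ v ∧ v ≤ Γ[i]!.2}} ∪
     {f | ∃ i, i + 1 < Γ.length ∧
        f ∈ minorSet K m n (Γ[i]!.2 - Γ[i + 1]!.1 + 1)
          {v | Γ[i + 1]!.1 ≤ v ∧ v ≤ Γ[i]!.2}})

namespace PGP

variable {K : Type*} [Field K]

/-- the evaluation point attached to a finite set of (1-based) columns -/
noncomputable def pt (m n : ℕ) (K : Type*) [Field K] (T : Finset ℕ) : Fin m × Fin n → K :=
  fun x => if (x.2.1 + 1) ∈ T ∧ x.1.1 = (T.filter (· < x.2.1 + 1)).card then 1 else 0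

def idx (T : Finset ℕ) (x : ℕ) : ℕ := (T.filter (· < x)).card

lemma idx_lt {T : Finset ℕ} {x : ℕ} (hx : x ∈ T) : idx T x < T.card := by
  have h1 : T.filter (· < x) ⊆ T.erase x := by
    intro y hy
    simp only [Finset.mem_filter] at hy
    exact Finset.mem_erase.mpr ⟨Nat.ne_of_lt hy.2, hy.1⟩
  calc idx T x ≤ (T.erase x).card := Finset.card_le_card h1
    _ < T.card := Finset.card_erase_lt_of_mem hx

lemma idx_strictMonoOn {T : Finset ℕ} {x y : ℕ} (hx : x ∈ T) (hy : y ∈ T) (hxy : x < y) :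
    idx T x < idx T y := by
  apply Finset.card_lt_card
  constructor
  · intro z hz
    simp only [Finset.mem_filter] at hz ⊢
    exact ⟨hz.1, lt_trans hz.2 hxy⟩
  · intro hsub
    have := hsub (Finset.mem_filter.mpr ⟨hx, hxy⟩)
    simp only [Finset.mem_filter] at this
    omega

lemma idx_injOn {T : Finset ℕ} {x y : ℕ} (hx : x ∈ T) (hy : y ∈ T)
    (h : idx T x = idx T y) : x = y := by
  rcases lt_trichotomy x y with h' | h' | h'
  · exact absurd h (Nat.ne_of_lt (idx_strictMonoOn hx hy h'))
  · exact h'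
  · exact absurd h.symm (Nat.ne_of_lt (idx_strictMonoOn hy hx h'))

lemma aeval_minor (T : Finset ℕ) {m n k : ℕ} (r : Fin k → Fin m) (c : Fin k → Fin n) :
    aeval (pt m n K T) ((Matrix.of fun a b => (X (r a, c b) : MvPolynomial (Fin m × Fin n) K)).det)
      = (Matrix.of fun a b : Fin k => pt m n K T (r a, c b)).det := by
  set M : Matrix (Fin k) (Fin k) (MvPolynomial (Fin m × Fin n) K) :=
    Matrix.of fun a b : Fin k => X (r a, c b) with hM
  have h := RingHom.map_det (aeval (pt m n K T) : MvPolynomial (Fin m × Fin n) K →ₐ[K] K).toRingHom M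
  have h2 : ((aeval (pt m n K T) : MvPolynomial (Fin m × Fin n) K →ₐ[K] K).toRingHom.mapMatrix M)
      = (Matrix.of fun a b : Fin k => pt m n K T (r a, c b)) := by
    ext a b
    simp only [hM, RingHom.mapMatrix_apply, AlgHom.toRingHom_eq_coe, Matrix.map_apply,
      Matrix.of_apply, RingHom.coe_coe, aeval_X]
  rw [h2] at h
  exact h

/-- vanishing of a minor when some used column is not in `T` -/
lemma vanish_aux (T : Finset ℕ) {m n k : ℕ} {cols : Set ℕ}
    {f : MvPolynomial (Fin m × Fin n) K} (hf : f ∈ minorSet K m n k cols)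
    (h : ∀ c : Fin k → Fin n, Function.Injective c → (∀ l, (c l).1 + 1 ∈ cols) →
      ∃ b, ((c b).1 + 1) ∉ T) :
    aeval (pt m n K T) f = 0 := by
  obtain ⟨r, c, hr, hc, hcols, rfl⟩ := hf
  rw [aeval_minor]
  obtain ⟨b, hb⟩ := h c hc hcols
  apply Matrix.det_eq_zero_of_column_eq_zero b
  intro i
  simp only [Matrix.of_apply, pt]
  rw [if_neg]
  tauto

/-- vanishing for interval minors: `T` meets the interval in fewer than `m` columns -/
lemma vanish_interval (T : Finset ℕ) {m n : ℕ} {a b : ℕ}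
    {f : MvPolynomial (Fin m × Fin n) K}
    (hf : f ∈ minorSet K m n m {v | a ≤ v ∧ v ≤ b})
    (hcard : (T ∩ Finset.Icc a b).card < m) :
    aeval (pt m n K T) f = 0 := by
  apply vanish_aux T hf
  intro c hc hcols
  by_contra hall
  push_neg at hall
  have hinj : Function.Injective (fun l : Fin m => (c l).1 + 1) := by
    intro x y hxy
    apply hc
    have h' : ((c x) : ℕ) + 1 = ((c y) : ℕ) + 1 := hxy
    exact Fin.ext (by omega)
  have hsub : Finset.image (fun l : Fin m => (c l).1 + 1) Finset.univ ⊆ T ∩ Finset.Icc a b := by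
    intro z hz
    simp only [Finset.mem_image, Finset.mem_univ, true_and] at hz
    obtain ⟨l, rfl⟩ := hz
    have := hcols l
    simp only [Set.mem_setOf_eq] at this
    exact Finset.mem_inter.mpr ⟨hall l, Finset.mem_Icc.mpr this⟩
  have := Finset.card_le_card hsub
  rw [Finset.card_image_of_injective _ hinj, Finset.card_univ, Fintype.card_fin] at this
  omega

/-- vanishing for overlap minors: some column of the (exact) overlap missing from `T` -/
lemma vanish_overlap (T : Finset ℕ) {m n : ℕ} {a b : ℕ} (hab : a ≤ b)
    {f : MvPolynomial (Fin m × Fin n) K}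
    (hf : f ∈ minorSet K m n (b - a + 1) {v | a ≤ v ∧ v ≤ b})
    {x : ℕ} (hx1 : a ≤ x) (hx2 : x ≤ b) (hxT : x ∉ T) :
    aeval (pt m n K T) f = 0 := by
  apply vanish_aux T hf
  intro c hc hcols
  have hinj : Function.Injective (fun l : Fin (b - a + 1) => (c l).1 + 1) := by
    intro u y hxy
    apply hc
    have h' : ((c u) : ℕ) + 1 = ((c y) : ℕ) + 1 := hxy
    exact Fin.ext (by omega)
  have hsub : Finset.image (fun l : Fin (b - a + 1) => (c l).1 + 1) Finset.univ
      ⊆ Finset.Icc a b := by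
    intro z hz
    simp only [Finset.mem_image, Finset.mem_univ, true_and] at hz
    obtain ⟨l, rfl⟩ := hz
    have := hcols l
    simp only [Set.mem_setOf_eq] at this
    exact Finset.mem_Icc.mpr this
  have heq : Finset.image (fun l : Fin (b - a + 1) => (c l).1 + 1) Finset.univ
      = Finset.Icc a b := by
    apply Finset.eq_of_subset_of_card_le hsub
    rw [Finset.card_image_of_injective _ hinj, Finset.card_univ, Fintype.card_fin,
      Nat.card_Icc]
    omega
  have hximg : x ∈ Finset.image (fun l : Fin (b - a + 1) => (c l).1 + 1) Finset.univ := by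
    rw [heq]; exact Finset.mem_Icc.mpr ⟨hx1, hx2⟩
  simp only [Finset.mem_image, Finset.mem_univ, true_and] at hximg
  obtain ⟨b₀, hb₀⟩ := hximg
  exact ⟨b₀, by rw [hb₀]; exact hxT⟩

/-- the nonvanishing minor supported on `T` -/
lemma nonvanish (T : Finset ℕ) {m n : ℕ} (cols : Set ℕ) {k : ℕ}
    (hT : ∀ x ∈ T, 1 ≤ x ∧ x ≤ n) (hTm : T.card ≤ m) (hk : T.card = k)
    (hcols : ∀ x ∈ T, x ∈ cols) :
    ∃ f ∈ minorSet K m n k cols, aeval (pt m n K T) f = 1 := by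
  have e := T.orderIsoOfFin hk
  have hmem : ∀ a : Fin k, (e a : ℕ) ∈ T := fun a => (e a).2
  have hle : ∀ a : Fin k, 1 ≤ (e a : ℕ) ∧ (e a : ℕ) ≤ n := fun a => hT _ (hmem a)
  set c : Fin k → Fin n := fun b => ⟨(e b : ℕ) - 1, by have := hle b; omega⟩ with hcdef
  set r : Fin k → Fin m := fun a => ⟨idx T (e a), lt_of_lt_of_le (idx_lt (hmem a)) hTm⟩ with hrdef
  have hceval : ∀ b, (c b).1 + 1 = (e b : ℕ) := by
    intro b; simp only [hcdef]; have := hle b; omega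
  have hcinj : Function.Injective c := by
    intro x y hxy
    have h1 : (c x).1 + 1 = (c y).1 + 1 := by rw [hxy]
    rw [hceval, hceval] at h1
    have : e x = e y := Subtype.ext h1
    exact e.injective this
  have hrinj : Function.Injective r := by
    intro x y hxy
    have h1 : idx T (e x) = idx T (e y) := congrArg Fin.val hxy
    have := idx_injOn (hmem x) (hmem y) h1
    exact e.injective (Subtype.ext this)
  refine ⟨(Matrix.of fun a b => X (r a, c b)).det, ⟨r, c, hrinj, hcinj, ?_, rfl⟩, ?_⟩
  · intro l; rw [hceval]; exact hcols _ (hmem l)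
  · rw [aeval_minor]
    have : (Matrix.of fun a b : Fin k => pt m n K T (r a, c b)) = 1 := by
      ext a b
      simp only [Matrix.of_apply, pt, hceval, Matrix.one_apply]
      by_cases hab : a = b
      · subst hab
        rw [if_pos ⟨hmem a, rfl⟩, if_pos rfl]
      · rw [if_neg, if_neg hab]
        rintro ⟨-, h2⟩
        have : idx T (e a) = idx T (e b) := h2
        have := idx_injOn (hmem a) (hmem b) this
        exact hab (e.injective (Subtype.ext this))
    rw [this, Matrix.det_one]



/-- abstract form of a prime sequence: `k` intervals `[A i, B i]` -/
structure Nice (m n k : ℕ) (A B : ℕ → ℕ) : Prop where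
  hk : 0 < k
  hA0 : A 0 = 0
  hBl : B (k-1) = n + 1
  hw : ∀ i, i < k → A i + m ≤ B i
  hs : ∀ i, i + 1 < k → A i < A (i+1) ∧ B i < B (i+1) ∧ A (i+1) ≤ B i ∧ B i + 2 ≤ A (i+1) + m

namespace Nice

variable {m n k : ℕ} {A B : ℕ → ℕ}

lemma Astep (N : Nice m n k A B) {i : ℕ} (h : i + 1 < k) : A i + 2 ≤ A (i+1) := by
  have h1 := N.hw i (by omega)
  have h2 := (N.hs i h).2.2.2
  have h3 := (N.hs i h).2.2.1
  omega

lemma Bstep (N : Nice m n k A B) {i : ℕ} (h : i + 1 < k) : B i + 2 ≤ B (i+1) := by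
  have h1 := N.hw (i+1) h
  have h2 := (N.hs i h).2.2.2
  omega

lemma Amono (N : Nice m n k A B) : ∀ (d i : ℕ), i + d < k → A i + 2*d ≤ A (i+d) := by
  intro d
  induction d with
  | zero => intro i _; simp
  | succ d ih =>
    intro i h
    have h1 := ih i (by omega)
    have h2 := N.Astep (i := i + d) (by omega)
    have : i + (d+1) = (i + d) + 1 := by omega
    rw [this]
    omega

lemma Bmono (N : Nice m n k A B) : ∀ (d i : ℕ), i + d < k → B i + 2*d ≤ B (i+d) := by
  intro d
  induction d with
  | zero => intro i _; simp
  | succ d ih =>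
    intro i h
    have h1 := ih i (by omega)
    have h2 := N.Bstep (i := i + d) (by omega)
    have : i + (d+1) = (i + d) + 1 := by omega
    rw [this]
    omega

lemma Amono' (N : Nice m n k A B) {i j : ℕ} (hij : i ≤ j) (hj : j < k) :
    A i + 2*(j-i) ≤ A j := by
  have := N.Amono (j - i) i (by omega)
  have h2 : i + (j - i) = j := by omega
  rwa [h2] at this

lemma Bmono' (N : Nice m n k A B) {i j : ℕ} (hij : i ≤ j) (hj : j < k) :
    B i + 2*(j-i) ≤ B j := by
  have := N.Bmono (j - i) i (by omega)
  have h2 : i + (j - i) = j := by omega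
  rwa [h2] at this

lemma A_lt (N : Nice m n k A B) {i j : ℕ} (hij : i < j) (hj : j < k) : A i < A j := by
  have := N.Amono' (le_of_lt hij) hj; omega

lemma B_lt (N : Nice m n k A B) {i j : ℕ} (hij : i < j) (hj : j < k) : B i < B j := by
  have := N.Bmono' (le_of_lt hij) hj; omega

/-- reverse monotonicity: from `A i ≤ A j` conclude `i ≤ j` -/
lemma A_le_rev (N : Nice m n k A B) {i j : ℕ} (hi : i < k) (hj : j < k)
    (h : A i ≤ A j) : i ≤ j := by
  by_contra hc
  exact absurd h (not_le.mpr (N.A_lt (by omega) hi))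

lemma B_le_rev (N : Nice m n k A B) {i j : ℕ} (hi : i < k) (hj : j < k)
    (h : B i ≤ B j) : i ≤ j := by
  by_contra hc
  exact absurd h (not_le.mpr (N.B_lt (by omega) hi))

lemma A_le (N : Nice m n k A B) {i j : ℕ} (hij : i ≤ j) (hj : j < k) : A i ≤ A j := by
  have := N.Amono' hij hj; omega

lemma B_le (N : Nice m n k A B) {i j : ℕ} (hij : i ≤ j) (hj : j < k) : B i ≤ B j := by
  have := N.Bmono' hij hj; omega

lemma A_pos (N : Nice m n k A B) {i : ℕ} (h1 : 1 ≤ i) (hi : i < k) : 2 ≤ A i := by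
  have := N.Amono' (Nat.zero_le i) hi
  have := N.hA0
  omega

lemma B_small (N : Nice m n k A B) {i : ℕ} (hi : i + 1 < k) : B i + 2 ≤ n + 1 := by
  have h1 := N.Bmono' (show i ≤ k - 1 by omega) (show k - 1 < k by have := N.hk; omega)
  have h2 := N.hBl
  omega

lemma A_last (N : Nice m n k A B) {i : ℕ} (hi : i < k) : A i + m ≤ n + 1 := by
  have h1 := N.hw i hi
  have h2 := N.Bmono' (show i ≤ k - 1 by omega) (show k - 1 < k by have := N.hk; omega)
  have h3 := N.hBl
  omega

/-- `B i = n + 1` forces `i = k - 1`. -/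
lemma B_eq_last (N : Nice m n k A B) {i : ℕ} (hi : i < k) (h : n ≤ B i) : i = k - 1 := by
  by_contra hc
  have := N.B_small (i := i) (by omega)
  omega

end Nice

/-- Case C: if every overlap of `Γ'` sits inside the corresponding structure of `Γ`
and every clipped interval of `Γ` sits inside an interval of `Γ'`, then the
sequences coincide. -/
theorem caseC {m n k k' : ℕ} {A B A' B' : ℕ → ℕ} (hm : 2 ≤ m) (hmn : m ≤ n)
    (N : Nice m n k A B) (N' : Nice m n k' A' B')
    (hC1 : ∀ p, p + 1 < k → ∃ l, l + 1 < k' ∧ A (p+1) ≤ A' (l+1) ∧ B' l ≤ B p)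
    (hC2 : ∀ p, p < k → ∃ i, i < k' ∧ A' i ≤ max (A p) 1 ∧ min (B p) n ≤ B' i) :
    k = k' ∧ ∀ i, i < k → A i = A' i ∧ B i = B' i := by
  have main : ∀ i, i < k → i < k' ∧ A i = A' i ∧ B i = B' i := by
    intro i
    induction i with
    | zero =>
      intro h0
      refine ⟨N'.hk, by rw [N.hA0, N'.hA0], ?_⟩
      obtain ⟨i₀, hi₀, h1, h2⟩ := hC2 0 h0
      have hA0 : A 0 = 0 := N.hA0
      have hi₀0 : i₀ = 0 := by
        by_contra hc
        have := N'.A_pos (i := i₀) (by omega) hi₀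
        omega
      subst hi₀0
      by_cases hk1 : k = 1
      · have hB0 : B 0 = n + 1 := by
          have := N.hBl; rw [hk1] at this; simpa using this
        have hn : n ≤ B' 0 := by omega
        have h01 : (0:ℕ) = k' - 1 := N'.B_eq_last N'.hk hn
        have hB'l := N'.hBl
        rw [← h01] at hB'l
        omega
      · have hk2 : 2 ≤ k := by have := N.hk; omega
        have hBs : B 0 + 2 ≤ n + 1 := N.B_small (by omega)
        have hle1 : B 0 ≤ B' 0 := by omega
        obtain ⟨l, hl, _, hBl⟩ := hC1 0 (by omega)
        have : B' 0 ≤ B' l := N'.B_le (Nat.zero_le l) (by omega)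
        omega
    | succ i ih =>
      intro hik
      obtain ⟨hik', hAi, hBi⟩ := ih (by omega)
      have hBsm : B i + 2 ≤ n + 1 := N.B_small hik
      have hik1' : i + 1 < k' := by
        by_contra hc
        have hie : i = k' - 1 := by omega
        have hbl := N'.hBl
        rw [← hie] at hbl
        omega
      obtain ⟨l, hl, hAl, hBl⟩ := hC1 i hik
      have hlle : l ≤ i := N'.B_le_rev (by omega) hik' (by omega)
      have hige : i ≤ l := by
        by_contra hc
        have h1 : A' (l+1) ≤ A' i := N'.A_le (by omega) hik'
        have h2 := (N.hs i hik).1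
        omega
      have hli : l = i := le_antisymm hlle hige
      subst hli
      obtain ⟨q, hq, hq1, hq2⟩ := hC2 (l+1) hik
      have hA1pos : 2 ≤ A (l+1) := N.A_pos (by omega) hik
      have hmaxq : max (A (l+1)) 1 = A (l+1) := by omega
      rw [hmaxq] at hq1
      have hq_ge : l + 1 ≤ q := by
        by_contra hc
        have h1 : B' q ≤ B' l := N'.B_le (by omega) hik'
        have h2 := (N.hs l hik).2.1
        omega
      have hq_le : q ≤ l + 1 := N'.A_le_rev hq hik1' (le_trans hq1 hAl)
      have hqe : q = l + 1 := le_antisymm hq_le hq_ge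
      subst hqe
      have hAeq : A (l+1) = A' (l+1) := le_antisymm hAl hq1
      by_cases hlast : l + 2 = k
      · have hB1 : B (l+1) = n + 1 := by
          have hbl := N.hBl; rw [show k - 1 = l + 1 by omega] at hbl; exact hbl
        have hnle : n ≤ B' (l+1) := by omega
        have he := N'.B_eq_last hik1' hnle
        have hbl' := N'.hBl
        rw [← he] at hbl'
        exact ⟨hik1', hAeq, by omega⟩
      · have hik2 : l + 1 + 1 < k := by omega
        have hBsm2 : B (l+1) + 2 ≤ n + 1 := N.B_small hik2
        have hble : B (l+1) ≤ B' (l+1) := by omega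
        obtain ⟨l', hl', hAl', hBl'⟩ := hC1 (l+1) hik2
        have hge2 : l + 1 ≤ l' := by
          by_contra hc
          have h1 : A' (l'+1) ≤ A' (l+1) := N'.A_le (by omega) hik1'
          have h2 := (N.hs (l+1) hik2).1
          omega
        have h3 : B' (l+1) ≤ B' l' := N'.B_le hge2 (by omega)
        exact ⟨hik1', hAeq, by omega⟩
  have hkk : k = k' := by
    obtain ⟨h1, h2, h3⟩ := main (k-1) (by have := N.hk; omega)
    have h4 := N.hBl
    have h5 : k - 1 = k' - 1 := N'.B_eq_last h1 (by omega)
    have h6 := N'.hk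
    have h7 := N.hk
    omega
  exact ⟨hkk, fun i hi => ⟨(main i hi).2.1, (main i hi).2.2⟩⟩

/-- Case B: construction of the witness column set inside a clipped `Γ`-interval
that is not contained in any `Γ'`-interval. -/
theorem lemmaW {m n k k' : ℕ} {A B A' B' : ℕ → ℕ} (hm : 2 ≤ m) (hmn : m ≤ n)
    (N : Nice m n k A B) (N' : Nice m n k' A' B') {p : ℕ} (hp : p < k)
    (hnc : ∀ i, i < k' → ¬(A' i ≤ max (A p) 1 ∧ min (B p) n ≤ B' i)) :
    ∃ T : Finset ℕ,
      T.card = m ∧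
      (∀ x ∈ T, max (A p) 1 ≤ x ∧ x ≤ min (B p) n) ∧
      (∀ i, i < k' → ∃ x ∈ T, ¬(A' i ≤ x ∧ x ≤ B' i)) ∧
      (∀ j, j + 1 < k' → ∃ x, (A' (j+1) ≤ x ∧ x ≤ B' j) ∧ x ∉ T) := by
  classical
  set w₀ := max (A p) 1 with hw₀
  set w₁ := min (B p) n with hw₁
  have hwp := N.hw p hp
  have hAlast := N.A_last hp
  -- size bound : the window has at least m + 1 columns
  have hsize : w₀ + m ≤ w₁ := by
    by_cases hpk : p + 1 = k
    · have hBp : B p = n + 1 := by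
        have hbl := N.hBl; rw [show k - 1 = p by omega] at hbl; exact hbl
      by_cases hp0 : p = 0
      · subst hp0
        have hk'2 : 2 ≤ k' := by
          by_contra hc
          have hk'1 : k' = 1 := by have := N'.hk; omega
          apply hnc 0 N'.hk
          have h2 := N'.hA0
          have h3 := N'.hBl
          rw [hk'1] at h3
          simp only [Nat.sub_self] at h3
          have h4 := N.hA0
          constructor
          · omega
          · omega
        have h1 := N'.A_last (i := 1) (by omega)
        have h2 := N'.A_pos (i := 1) le_rfl (by omega)
        have h4 := N.hA0
        omega
      · have hApos := N.A_pos (i := p) (by omega) hp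
        by_contra hc
        apply hnc (k'-1) (by have := N'.hk; omega)
        have h1 := N'.A_last (i := k'-1) (by have := N'.hk; omega)
        have h2 := N'.hBl
        constructor
        · omega
        · omega
    · have hBps : B p + 2 ≤ n + 1 := N.B_small (by omega)
      by_cases hp0 : p = 0
      · subst hp0
        by_contra hc
        apply hnc 0 N'.hk
        have h1 := N'.hw 0 N'.hk
        have h2 := N'.hA0
        have h3 := N.hA0
        constructor
        · omega
        · omega
      · have hApos := N.A_pos (i := p) (by omega) hp
        omega
  have hw₀1 : 1 ≤ w₀ := by omega
  have hw₁n : w₁ ≤ n := by omega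
  -- the crossing overlap
  have hP0 : A' 0 ≤ w₀ := by rw [N'.hA0]; omega
  set l : ℕ := Nat.findGreatest (fun i => A' i ≤ w₀) (k'-1) with hldef
  have hPl : A' l ≤ w₀ :=
    Nat.findGreatest_spec (P := fun i => A' i ≤ w₀) (Nat.zero_le _) hP0
  have hlle : l ≤ k' - 1 := Nat.findGreatest_le _
  have hlk : l < k' := by have := N'.hk; omega
  have hlne : l ≠ k' - 1 := by
    intro he
    apply hnc l hlk
    refine ⟨hPl, ?_⟩
    have := N'.hBl
    rw [← he] at this
    omega
  have hl1 : l + 1 < k' := by omega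
  have hu : w₀ < A' (l+1) := by
    have hng := Nat.findGreatest_is_greatest (k := l + 1)
      (by rw [← hldef]; omega) (by omega)
    omega
  have hv : B' l < w₁ := by
    by_contra hc
    exact hnc l hlk ⟨hPl, by omega⟩
  have hAB'l : A' (l+1) ≤ B' l := (N'.hs l hl1).2.2.1
  have hA'l1pos : 2 ≤ A' (l+1) := N'.A_pos (by omega) hl1
  set u : ℕ := A' (l+1) - 1 with hudef
  set v : ℕ := B' l + 1 with hvdef
  have huv : u < v := by omega
  have hu0 : w₀ ≤ u := by omega
  have hv1 : v ≤ w₁ := by omega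
  -- the overlaps fully inside the window
  set FULL : Finset ℕ := (Finset.range k').filter
    (fun j => j + 1 < k' ∧ w₀ ≤ A' (j+1) ∧ B' j ≤ w₁) with hFULL
  have hmemFULL : ∀ j, j ∈ FULL ↔ (j + 1 < k' ∧ w₀ ≤ A' (j+1) ∧ B' j ≤ w₁) := by
    intro j
    rw [hFULL, Finset.mem_filter, Finset.mem_range]
    constructor
    · rintro ⟨-, h⟩; exact h
    · intro h; exact ⟨by omega, h⟩
  -- hitting function for the overlaps
  set hcol : ℕ → ℕ := fun j => if A' (j+1) = v then A' (j+1) + 1 else A' (j+1) with hhcol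
  have hcol_spec : ∀ j ∈ FULL, A' (j+1) ≤ hcol j ∧ hcol j ≤ B' j ∧ hcol j ≠ u ∧ hcol j ≠ v := by
    intro j hj
    rw [hmemFULL] at hj
    obtain ⟨hj1, hj2, hj3⟩ := hj
    by_cases hcase : A' (j+1) = v
    · have hj_gt : l + 1 < j + 1 := by
        by_contra hc
        have : A' (j+1) ≤ A' (l+1) := N'.A_le (by omega) hl1
        omega
      have hBj : B' (l+1) ≤ B' j := N'.B_le (by omega) (by omega)
      have hBstep : B' l + 2 ≤ B' (l+1) := N'.Bstep hl1
      rw [hhcol]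
      simp only [if_pos hcase]
      exact ⟨by omega, by omega, by omega, by omega⟩
    · rw [hhcol]
      simp only [if_neg hcase]
      refine ⟨le_refl _, (N'.hs j hj1).2.2.1, ?_, hcase⟩
      rcases lt_trichotomy (j+1) (l+1) with hlt | heq | hgt
      · have h1 : A' (j+1) ≤ A' l := N'.A_le (by omega) hlk
        have h2 : A' l + 2 ≤ A' (l+1) := N'.Astep hl1
        omega
      · rw [heq]; omega
      · have : A' (l+1) ≤ A' (j+1) := N'.A_le (by omega) (by omega)
        omega
  -- counting
  have hlFULL : l ∈ FULL := (hmemFULL l).mpr ⟨hl1, by omega, by omega⟩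
  have hFne : FULL.Nonempty := ⟨l, hlFULL⟩
  set r : ℕ := FULL.card with hrdef
  have hrpos : 1 ≤ r := Finset.card_pos.mpr hFne
  set jmin := FULL.min' hFne with hjmin
  set jmax := FULL.max' hFne with hjmax
  have hjminF : jmin ∈ FULL := FULL.min'_mem hFne
  have hjmaxF : jmax ∈ FULL := FULL.max'_mem hFne
  have hjminmax : jmin ≤ jmax := FULL.min'_le _ hjmaxF
  have hrle : r ≤ jmax + 1 - jmin := by
    have hsub : FULL ⊆ Finset.Icc jmin jmax := by
      intro x hx
      exact Finset.mem_Icc.mpr ⟨FULL.min'_le x hx, FULL.le_max' x hx⟩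
    have := Finset.card_le_card hsub
    rw [Nat.card_Icc] at this
    omega
  have hcount : r + m ≤ w₁ + 1 - w₀ := by
    rcases eq_or_lt_of_le hrpos with h1 | h2
    · omega
    · have hminmaxlt : jmin < jmax := by
        by_contra hc
        have hsub2 : FULL ⊆ {jmin} := by
          intro x hx
          have h1 := FULL.min'_le x hx
          have h2 := FULL.le_max' x hx
          simp only [Finset.mem_singleton]
          omega
        have := Finset.card_le_card hsub2
        simp only [Finset.card_singleton] at this
        omega
      have hminm := (hmemFULL jmin).mp hjminF
      have hmaxm := (hmemFULL jmax).mp hjmaxF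
      have hchain : A' (jmin+1) + m + 2*(jmax - (jmin+1)) ≤ B' jmax := by
        have h1 := N'.hw (jmin+1) hminm.1
        have h2 := N'.Bmono' (show jmin+1 ≤ jmax by omega) (by omega)
        omega
      have hl_ge : jmin ≤ l := FULL.min'_le l hlFULL
      have hl_le : l ≤ jmax := FULL.le_max' l hlFULL
      have hw0A := hminm.2.1
      have hBw1 := hmaxm.2.2
      rcases eq_or_lt_of_le hl_ge with hlmin | hlmin
      · have : w₀ + 1 ≤ A' (jmin+1) := by rw [hlmin]; omega
        omega
      · rcases eq_or_lt_of_le hl_le with hlmax | hlmax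
        · have : B' jmax + 1 ≤ w₁ := by rw [← hlmax]; omega
          omega
        · have h3 : ({jmin, l, jmax} : Finset ℕ) ⊆ FULL := by
            intro x hx
            simp only [Finset.mem_insert, Finset.mem_singleton] at hx
            rcases hx with rfl | rfl | rfl
            · exact hjminF
            · exact hlFULL
            · exact hjmaxF
          have hcard3 : ({jmin, l, jmax} : Finset ℕ).card = 3 := by
            rw [Finset.card_insert_of_notMem (by simp; omega),
              Finset.card_insert_of_notMem (by simp; omega), Finset.card_singleton]
          have := Finset.card_le_card h3
          omega
  -- build T
  set H : Finset ℕ := FULL.image hcol with hH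
  have hHcard : H.card ≤ r := Finset.card_image_le
  have huH : u ∉ H := by
    intro hmem
    rw [hH, Finset.mem_image] at hmem
    obtain ⟨j, hj, he⟩ := hmem
    exact (hcol_spec j hj).2.2.1 he
  have hvH : v ∉ H := by
    intro hmem
    rw [hH, Finset.mem_image] at hmem
    obtain ⟨j, hj, he⟩ := hmem
    exact (hcol_spec j hj).2.2.2 he
  set Tgt : Finset ℕ := Finset.Icc w₀ w₁ \ H with hTgt
  have hbase_sub : ({u, v} : Finset ℕ) ⊆ Tgt := by
    intro x hx
    simp only [Finset.mem_insert, Finset.mem_singleton] at hx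
    rcases hx with rfl | rfl
    · exact Finset.mem_sdiff.mpr ⟨Finset.mem_Icc.mpr ⟨hu0, by omega⟩, huH⟩
    · exact Finset.mem_sdiff.mpr ⟨Finset.mem_Icc.mpr ⟨by omega, hv1⟩, hvH⟩
  have hbase_card : ({u, v} : Finset ℕ).card = 2 := by
    rw [Finset.card_insert_of_notMem (by simp only [Finset.mem_singleton]; omega),
      Finset.card_singleton]
  have hTgt_card : m ≤ Tgt.card := by
    have h1 : (Finset.Icc w₀ w₁).card ≤ Tgt.card + H.card := by
      rw [hTgt]
      exact Finset.card_le_card_sdiff_add_card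
    rw [Nat.card_Icc] at h1
    omega
  obtain ⟨T, hTbase, hTsub, hTcard⟩ :=
    Finset.exists_subsuperset_card_eq (n := m - 2 + ({u, v} : Finset ℕ).card) hbase_sub
      (by omega) (by rw [hbase_card]; omega)
  have hTm : T.card = m := by rw [hTcard, hbase_card]; omega
  have huT : u ∈ T := hTbase (by simp)
  have hvT : v ∈ T := hTbase (by simp)
  have hTIcc : ∀ x ∈ T, w₀ ≤ x ∧ x ≤ w₁ := by
    intro x hx
    have := hTsub hx
    rw [hTgt, Finset.mem_sdiff, Finset.mem_Icc] at this
    exact this.1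
  refine ⟨T, hTm, hTIcc, ?_, ?_⟩
  · intro i hi
    by_cases hcase : A' i ≤ u
    · refine ⟨v, hvT, ?_⟩
      have hile : i ≤ l := by
        by_contra hc
        have : A' (l+1) ≤ A' i := N'.A_le (by omega) hi
        omega
      have : B' i ≤ B' l := N'.B_le hile hlk
      rintro ⟨-, h2⟩
      omega
    · exact ⟨u, huT, fun hcon => hcase hcon.1⟩
  · intro j hj
    by_cases hjF : j ∈ FULL
    · refine ⟨hcol j, ⟨(hcol_spec j hjF).1, (hcol_spec j hjF).2.1⟩, ?_⟩
      intro hmem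
      have hx := hTsub hmem
      rw [hTgt, Finset.mem_sdiff] at hx
      exact hx.2 (by rw [hH]; exact Finset.mem_image_of_mem hcol hjF)
    · rw [hmemFULL] at hjF
      by_cases hc2 : A' (j+1) < w₀
      · refine ⟨A' (j+1), ⟨le_refl _, (N'.hs j hj).2.2.1⟩, fun hmem => ?_⟩
        have := hTIcc _ hmem
        omega
      · have hc3 : w₁ < B' j := by
          by_contra hc4
          exact hjF ⟨hj, by omega, by omega⟩
        refine ⟨B' j, ⟨(N'.hs j hj).2.2.1, le_refl _⟩, fun hmem => ?_⟩
        have := hTIcc _ hmem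
        omega


-- === glue ===
abbrev fA (Γ : List (ℕ × ℕ)) : ℕ → ℕ := fun i => (Γ[i]!).1
abbrev fB (Γ : List (ℕ × ℕ)) : ℕ → ℕ := fun i => (Γ[i]!).2

theorem nice_of {m n : ℕ} {Γ : List (ℕ × ℕ)} (h : IsPrimeSeq m n Γ) :
    Nice m n Γ.length (fA Γ) (fB Γ) := by
  obtain ⟨h0, h1, h2, h3, h4⟩ := h
  refine ⟨h0, ?_, ?_, ?_, ?_⟩
  · show (Γ[0]!).1 = 0
    rw [getElem!_pos Γ 0 h0]; exact h1
  · show (Γ[Γ.length - 1]!).2 = n + 1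
    rw [getElem!_pos Γ _ (by omega)]; exact h2
  · intro i hi
    show (Γ[i]!).1 + m ≤ (Γ[i]!).2
    rw [getElem!_pos Γ i hi]; exact h3 i hi
  · intro i hi
    have e1 : Γ[i]! = Γ[i]'(by omega) := getElem!_pos Γ i (by omega)
    have e2 : Γ[i+1]! = Γ[i+1]'hi := getElem!_pos Γ (i+1) hi
    show (Γ[i]!).1 < (Γ[i+1]!).1 ∧ (Γ[i]!).2 < (Γ[i+1]!).2 ∧
      (Γ[i+1]!).1 ≤ (Γ[i]!).2 ∧ (Γ[i]!).2 + 2 ≤ (Γ[i+1]!).1 + m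
    rw [e1, e2]; exact h4 i hi

theorem eq_of_eqs {Γ Γ' : List (ℕ × ℕ)} (hlen : Γ.length = Γ'.length)
    (h : ∀ i, i < Γ.length → fA Γ i = fA Γ' i ∧ fB Γ i = fB Γ' i) : Γ = Γ' := by
  apply List.ext_getElem hlen
  intro i h1 h2
  have h3 := h i h1
  simp only [fA, fB] at h3
  rw [getElem!_pos Γ i h1, getElem!_pos Γ' i h2] at h3
  exact Prod.ext h3.1 h3.2

theorem notLE {m n : ℕ} (hm : 2 ≤ m) (hmn : m ≤ n)
    {Γ Γ' : List (ℕ × ℕ)} (hΓ : IsPrimeSeq m n Γ) (hΓ' : IsPrimeSeq m n Γ')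
    (hne : Γ ≠ Γ') : ¬ PGamma K m n Γ ≤ PGamma K m n Γ' := by
  intro hle
  classical
  have N : Nice m n Γ.length (fA Γ) (fB Γ) := nice_of hΓ
  have N' : Nice m n Γ'.length (fA Γ') (fB Γ') := nice_of hΓ'
  -- killing lemma: all of `PGamma Γ'` vanishes at the point attached to `T`
  have kill : ∀ T : Finset ℕ,
      (∀ i, i < Γ'.length → (T ∩ Finset.Icc (fA Γ' i) (fB Γ' i)).card < m) →
      (∀ j, j + 1 < Γ'.length → ∃ x, (fA Γ' (j+1) ≤ x ∧ x ≤ fB Γ' j) ∧ x ∉ T) →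
      ∀ f ∈ PGamma K m n Γ', aeval (pt m n K T) f = 0 := by
    intro T h1 h2
    suffices hker : PGamma K m n Γ' ≤
        RingHom.ker ((aeval (pt m n K T) : MvPolynomial (Fin m × Fin n) K →ₐ[K] K)).toRingHom by
      exact fun f hf => RingHom.mem_ker.mp (hker hf)
    unfold PGamma
    rw [Ideal.span_le]
    rintro g hg
    simp only [Set.mem_union, Set.mem_setOf_eq] at hg
    rcases hg with ⟨i, hi, hgi⟩ | ⟨i, hi, hgi⟩
    · simp only [SetLike.mem_coe, RingHom.mem_ker]
      exact vanish_interval T hgi (h1 i hi)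
    · simp only [SetLike.mem_coe, RingHom.mem_ker]
      obtain ⟨x, hx, hxT⟩ := h2 i hi
      have hab : fA Γ' (i+1) ≤ fB Γ' i := (N'.hs i hi).2.2.1
      exact vanish_overlap T hab hgi hx.1 hx.2 hxT
  by_cases hCaseA : ∃ p, p + 1 < Γ.length ∧ ∀ l, l + 1 < Γ'.length →
      ∃ x, (fA Γ' (l+1) ≤ x ∧ x ≤ fB Γ' l) ∧ ¬(fA Γ (p+1) ≤ x ∧ x ≤ fB Γ p)
  · obtain ⟨p, hpk, hpA⟩ := hCaseA
    set T : Finset ℕ := Finset.Icc (fA Γ (p+1)) (fB Γ p) with hT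
    have hab : fA Γ (p+1) ≤ fB Γ p := (N.hs p hpk).2.2.1
    have h2A : 2 ≤ fA Γ (p+1) := N.A_pos (by omega) hpk
    have hBn : fB Γ p + 2 ≤ n + 1 := N.B_small hpk
    have hcardT : T.card = fB Γ p - fA Γ (p+1) + 1 := by
      rw [hT, Nat.card_Icc]; omega
    have hTsize : T.card + 1 ≤ m := by
      have := (N.hs p hpk).2.2.2; omega
    obtain ⟨f, hfmem, hfeval⟩ := nonvanish (K := K) T
      (m := m) (n := n) ({v | fA Γ (p+1) ≤ v ∧ v ≤ fB Γ p})
      (fun x hx => by rw [hT, Finset.mem_Icc] at hx; omega)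
      (by omega) hcardT
      (fun x hx => by rw [hT, Finset.mem_Icc] at hx; exact hx)
    have hfΓ : f ∈ PGamma K m n Γ := by
      apply Ideal.subset_span
      exact Or.inr ⟨p, hpk, hfmem⟩
    have h0 := kill T
      (fun i hi => by
        have hsub : T ∩ Finset.Icc (fA Γ' i) (fB Γ' i) ⊆ T := Finset.inter_subset_left
        have := Finset.card_le_card hsub
        omega)
      (fun j hj => by
        obtain ⟨x, hx1, hx2⟩ := hpA j hj
        refine ⟨x, hx1, fun hc => hx2 ?_⟩
        rw [hT, Finset.mem_Icc] at hc
        exact hc)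
      f (hle hfΓ)
    rw [hfeval] at h0
    exact one_ne_zero h0
  by_cases hCaseB : ∃ p, p < Γ.length ∧ ∀ i, i < Γ'.length →
      ¬(fA Γ' i ≤ max (fA Γ p) 1 ∧ min (fB Γ p) n ≤ fB Γ' i)
  · obtain ⟨p, hpk, hpB⟩ := hCaseB
    obtain ⟨T, hTm, hTbd, hTint, hTov⟩ := lemmaW hm hmn N N' hpk hpB
    obtain ⟨f, hfmem, hfeval⟩ := nonvanish (K := K) T
      (m := m) (n := n) ({v | fA Γ p ≤ v ∧ v ≤ fB Γ p})
      (fun x hx => by have := hTbd x hx; omega)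
      (by omega) hTm
      (fun x hx => by have := hTbd x hx; simp only [Set.mem_setOf_eq]; omega)
    have hfΓ : f ∈ PGamma K m n Γ := by
      apply Ideal.subset_span
      exact Or.inl ⟨p, hpk, hfmem⟩
    have h0 := kill T
      (fun i hi => by
        obtain ⟨x, hxT, hxnot⟩ := hTint i hi
        have hsub : T ∩ Finset.Icc (fA Γ' i) (fB Γ' i) ⊆ T.erase x := by
          intro y hy
          rw [Finset.mem_inter, Finset.mem_Icc] at hy
          refine Finset.mem_erase.mpr ⟨?_, hy.1⟩
          rintro rfl
          exact hxnot hy.2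
        have h1 := Finset.card_le_card hsub
        have h2 := Finset.card_erase_lt_of_mem hxT
        omega)
      hTov f (hle hfΓ)
    rw [hfeval] at h0
    exact one_ne_zero h0
  · push_neg at hCaseA hCaseB
    have hC1 : ∀ p, p + 1 < Γ.length → ∃ l, l + 1 < Γ'.length ∧
        fA Γ (p+1) ≤ fA Γ' (l+1) ∧ fB Γ' l ≤ fB Γ p := by
      intro p hpk
      obtain ⟨l, hl, hall⟩ := hCaseA p hpk
      have hab := (N'.hs l hl).2.2.1
      have h1 := hall (fA Γ' (l+1)) ⟨le_rfl, hab⟩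
      have h2 := hall (fB Γ' l) ⟨hab, le_rfl⟩
      exact ⟨l, hl, h1.1, h2.2⟩
    obtain ⟨hkk, hptw⟩ := caseC hm hmn N N' hC1 hCaseB
    exact hne (eq_of_eqs hkk hptw)

end PGP

/-- distinct prime sequences give incomparable ideals; in particular
`P_Γ` is not contained in `P_{Γ'}`. -/
theorem PGamma_incomparable
    (K : Type*) [Field K] (m n : ℕ) (hm : 2 ≤ m) (hmn : m ≤ n)
    (Γ Γ' : List (ℕ × ℕ)) (hΓ : IsPrimeSeq m n Γ) (hΓ' : IsPrimeSeq m n Γ')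
    (hne : Γ ≠ Γ') :
    ¬ PGamma K m n Γ ≤ PGamma K m n Γ' ∧ ¬ PGamma K m n Γ' ≤ PGamma K m n Γ :=
  ⟨PGP.notLE hm hmn hΓ hΓ' hne, PGP.notLE hm hmn hΓ' hΓ hne.symm⟩
end
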